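/- arXiv:1607.05499 — 5 statements merged into one kernel-verified Lean document; each statement's English description precedes it below -/
import Mathlib

section
/- Let R be a unital ring and X a set. The reduction-finite elements of the free R-ring R⟨X⟩ under a reduction system S form an R-subbimodule of R⟨X⟩. -/
/-- The free (non-unital) `R`-ring `R⟨X⟩` on a set `X`: the free left `R`-module on the
free semigroup of nonempty words over `X`, with convolution multiplication. -/
abbrev BFree (R X : Type) [Ring R] : Type := MonoidAlgebra R (FreeSemigroup X)

variable {R X : Type} [Ring R]

/-- A rule `σ = (W_σ, f_σ)` of a reduction system: a word `W_σ` together with an element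
`f_σ` of `R⟨X⟩` all of whose coefficients are central in `R`. -/
structure BRule (R X : Type) [Ring R] : Type where
  W : FreeSemigroup X
  f : BFree R X
  central : ∀ w, f.coeff w ∈ Set.center R

/-- The word `A W B`, where `A` and `B` are possibly empty words. -/
def glue (A : List X) (W : FreeSemigroup X) (B : List X) : FreeSemigroup X :=
  match A with
  | [] => ⟨W.head, W.tail ++ B⟩
  | x :: A' => ⟨x, A' ++ (W.head :: W.tail) ++ B⟩

noncomputable def ofx (x : X) : BFree R X := MonoidAlgebra.single (FreeSemigroup.of x) 1

/-- Left multiplication by a possibly empty word. -/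
noncomputable def lmulW (A : List X) (a : BFree R X) : BFree R X :=
  A.foldr (fun x acc => ofx x * acc) a

/-- Right multiplication by a possibly empty word. -/
noncomputable def rmulW (a : BFree R X) (B : List X) : BFree R X :=
  B.foldl (fun acc x => acc * ofx x) a

open Classical in
/-- The reduction `r_{AσB}` : the `R`-bimodule endomorphism of `R⟨X⟩` sending the word
`A W_σ B` to `A f_σ B` and fixing all other words. -/
noncomputable def applyRed (σ : BRule R X) (A B : List X) (a : BFree R X) : BFree R X :=
  a.coeff.sum fun w c =>
    if w = glue A σ.W B then c • lmulW A (rmulW σ.f B) else MonoidAlgebra.single w c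

/-- The data of a single reduction: a rule and two (possibly empty) flanking words. -/
abbrev BStep (R X : Type) [Ring R] : Type := BRule R X × List X × List X

noncomputable def applyStep (s : BStep R X) (a : BFree R X) : BFree R X :=
  applyRed s.1 s.2.1 s.2.2 a

/-- The iterated application of an infinite sequence of reductions. -/
noncomputable def applySeq (seq : ℕ → BStep R X) (a : BFree R X) : ℕ → BFree R X
  | 0 => a
  | n + 1 => applyStep (seq n) (applySeq seq a n)

/-- The reduction `r_{AσB}` acts trivially on `a` if the coefficient of `A W_σ B`
in `a` is zero. -/
def ActsTrivially (s : BStep R X) (a : BFree R X) : Prop :=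
  a.coeff (glue s.2.1 s.1.W s.2.2) = 0

/-- `a` is reduction-finite under the reduction system `S` if for every infinite sequence
of reductions from `S`, all but finitely many act trivially along the orbit of `a`. -/
def ReductionFinite (S : Set (BRule R X)) (a : BFree R X) : Prop :=
  ∀ seq : ℕ → BStep R X, (∀ n, (seq n).1 ∈ S) →
    ∃ N, ∀ n ≥ N, ActsTrivially (seq n) (applySeq seq a n)

/-- `a` is irreducible under `S` if it involves no word of the form `A W_σ B`. -/
def BIrreducible (S : Set (BRule R X)) (a : BFree R X) : Prop :=
  ∀ σ ∈ S, ∀ A B : List X, a.coeff (glue A σ.W B) = 0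

/-- The result of applying a finite sequence of reductions. -/
noncomputable def applyList (L : List (BStep R X)) (a : BFree R X) : BFree R X :=
  L.foldl (fun b s => applyStep s b) a

/-- A finite sequence of reductions from `S` is final on `a` if applying it to `a`
yields an irreducible element. -/
def FinalOn (S : Set (BRule R X)) (L : List (BStep R X)) (a : BFree R X) : Prop :=
  (∀ s ∈ L, s.1 ∈ S) ∧ BIrreducible S (applyList L a)

/-- `a` is reduction-unique if it is reduction-finite and its images under all final
sequences of reductions coincide. -/
def ReductionUnique (S : Set (BRule R X)) (a : BFree R X) : Prop :=
  ReductionFinite S a ∧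
    ∀ L L' : List (BStep R X), FinalOn S L a → FinalOn S L' a →
      applyList L a = applyList L' a


section Aux

open MulOpposite

variable {R X : Type} [Ring R]

lemma bmul_central {a b : BFree R X} (ha : ∀ w, a.coeff w ∈ Set.center R)
    (hb : ∀ w, b.coeff w ∈ Set.center R) : ∀ w, (a * b).coeff w ∈ Set.center R := by
  classical
  intro w
  rw [MonoidAlgebra.coeff_mul]
  refine sum_mem (S := Subsemiring.center R) fun i _ => ?_
  refine sum_mem (S := Subsemiring.center R) fun j _ => ?_
  dsimp only
  split_ifs
  · exact mul_mem (ha i) (hb j)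
  · exact zero_mem _

lemma ofx_central (x : X) : ∀ w, (ofx (R := R) x).coeff w ∈ Set.center R := by
  intro w
  classical
  rw [ofx, MonoidAlgebra.coeff_single_apply]
  split_ifs
  · exact Set.one_mem_center
  · exact Set.zero_mem_center

lemma lmulW_central (A : List X) {a : BFree R X} (ha : ∀ w, a.coeff w ∈ Set.center R) :
    ∀ w, (lmulW A a).coeff w ∈ Set.center R := by
  induction A with
  | nil => exact ha
  | cons x A ih => exact bmul_central (ofx_central x) ih

lemma rmulW_central (B : List X) {a : BFree R X} (ha : ∀ w, a.coeff w ∈ Set.center R) :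
    ∀ w, (rmulW a B).coeff w ∈ Set.center R := by
  induction B generalizing a with
  | nil => exact ha
  | cons x B ih => exact ih (bmul_central ha (ofx_central x))

lemma applyRed_add (σ : BRule R X) (A B : List X) (a b : BFree R X) :
    applyRed σ A B (a + b) = applyRed σ A B a + applyRed σ A B b := by
  classical
  unfold applyRed
  rw [MonoidAlgebra.coeff_add]
  refine Finsupp.sum_add_index' (fun w => ?_) (fun w c₁ c₂ => ?_)
  · split_ifs <;> simp
  · split_ifs <;> simp [add_smul, MonoidAlgebra.single_add]

lemma applyRed_smul (σ : BRule R X) (A B : List X) (r : R) (a : BFree R X) :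
    applyRed σ A B (r • a) = r • applyRed σ A B a := by
  classical
  unfold applyRed
  rw [MonoidAlgebra.coeff_smul, Finsupp.sum_smul_index' (fun w => by split_ifs <;> simp), Finsupp.smul_sum]
  refine Finsupp.sum_congr fun w _ => ?_
  split_ifs
  · rw [smul_eq_mul, mul_smul]
  · rw [MonoidAlgebra.smul_single, smul_eq_mul]

lemma applyRed_opsmul (σ : BRule R X) (A B : List X) (r : R) (a : BFree R X) :
    applyRed σ A B (op r • a) = op r • applyRed σ A B a := by
  classical
  unfold applyRed
  rw [MonoidAlgebra.coeff_smul, Finsupp.sum_smul_index' (fun w => by split_ifs <;> simp), Finsupp.smul_sum]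
  refine Finsupp.sum_congr fun w _ => ?_
  split_ifs
  · ext v
    have hc := (lmulW_central A (rmulW_central B σ.central)) v
    rw [Semigroup.mem_center_iff] at hc
    have h1 : ((a.coeff w * r) • lmulW A (rmulW σ.f B)).coeff v
        = (a.coeff w * r) * (lmulW A (rmulW σ.f B)).coeff v := rfl
    have h2 : (op r • a.coeff w • lmulW A (rmulW σ.f B)).coeff v
        = (a.coeff w * (lmulW A (rmulW σ.f B)).coeff v) * r := rfl
    rw [op_smul_eq_mul, h1, h2, mul_assoc, hc r, ← mul_assoc]
  · ext v
    classical
    have h2 : (op r • (MonoidAlgebra.single w (a.coeff w) : BFree R X)).coeff v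
        = (MonoidAlgebra.single w (a.coeff w) : BFree R X).coeff v * r := rfl
    rw [op_smul_eq_mul (a := r), h2]
    simp only [MonoidAlgebra.coeff_single, Finsupp.single_apply]
    split_ifs <;> simp

lemma applyRed_zero (σ : BRule R X) (A B : List X) :
    applyRed σ A B (0 : BFree R X) = 0 := by
  classical
  unfold applyRed
  exact Finsupp.sum_zero_index

lemma applySeq_zero (seq : ℕ → BStep R X) (n : ℕ) :
    applySeq seq (0 : BFree R X) n = 0 := by
  induction n with
  | zero => rfl
  | succ n ih => rw [applySeq, ih]; exact applyRed_zero _ _ _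

lemma applySeq_add (seq : ℕ → BStep R X) (a b : BFree R X) (n : ℕ) :
    applySeq seq (a + b) n = applySeq seq a n + applySeq seq b n := by
  induction n with
  | zero => rfl
  | succ n ih => rw [applySeq, ih, applySeq, applySeq]; exact applyRed_add _ _ _ _ _

lemma applySeq_smul (seq : ℕ → BStep R X) (r : R) (a : BFree R X) (n : ℕ) :
    applySeq seq (r • a) n = r • applySeq seq a n := by
  induction n with
  | zero => rfl
  | succ n ih => rw [applySeq, ih, applySeq]; exact applyRed_smul _ _ _ _ _

lemma applySeq_opsmul (seq : ℕ → BStep R X) (r : R) (a : BFree R X) (n : ℕ) :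
    applySeq seq (op r • a) n = op r • applySeq seq a n := by
  induction n with
  | zero => rfl
  | succ n ih => rw [applySeq, ih, applySeq]; exact applyRed_opsmul _ _ _ _ _

end Aux

/-- The reduction-finite elements of the free `R`-ring `R⟨X⟩` under a
reduction system `S` form an `R`-subbimodule of `R⟨X⟩`: they contain `0` and are closed
under addition and under the left and right `R`-actions. -/
theorem reductionFinite_subbimodule (R X : Type) [Ring R] (S : Set (BRule R X)) :
    ReductionFinite S (0 : BFree R X) ∧
    (∀ a b : BFree R X, ReductionFinite S a → ReductionFinite S b →
      ReductionFinite S (a + b)) ∧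
    (∀ (r : R) (a : BFree R X), ReductionFinite S a → ReductionFinite S (r • a)) ∧
    (∀ (r : R) (a : BFree R X), ReductionFinite S a →
      ReductionFinite S (MulOpposite.op r • a)) := by
  constructor
  · intro seq _
    exact ⟨0, fun n _ => by simp [ActsTrivially, applySeq_zero]⟩
  refine ⟨?_, ?_, ?_⟩
  · intro a b ha hb seq hseq
    obtain ⟨Na, hNa⟩ := ha seq hseq
    obtain ⟨Nb, hNb⟩ := hb seq hseq
    refine ⟨max Na Nb, fun n hn => ?_⟩
    have h1 := hNa n (le_trans (le_max_left _ _) hn)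
    have h2 := hNb n (le_trans (le_max_right _ _) hn)
    unfold ActsTrivially at *
    rw [applySeq_add, MonoidAlgebra.coeff_add, Finsupp.add_apply, h1, h2, add_zero]
  · intro r a ha seq hseq
    obtain ⟨N, hN⟩ := ha seq hseq
    refine ⟨N, fun n hn => ?_⟩
    have h1 := hN n hn
    unfold ActsTrivially at *
    rw [applySeq_smul, MonoidAlgebra.coeff_smul, Finsupp.smul_apply, h1, smul_zero]
  · intro r a ha seq hseq
    obtain ⟨N, hN⟩ := ha seq hseq
    refine ⟨N, fun n hn => ?_⟩
    have h1 := hN n hn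
    unfold ActsTrivially at *
    rw [applySeq_opsmul, MonoidAlgebra.coeff_smul, Finsupp.smul_apply, h1, smul_zero]
end

section
/- For a field K, the weighted Leavitt path algebra of the weighted graph with one vertex and n+k loops each of weight n is isomorphic as a K-algebra to the Leavitt algebra L_K(n, n+k). -/
/-- Generators of the Leavitt algebra `L_K(n, n+k)`: the entries `y_{ij}` of an
`n × (n+k)` matrix `Y` and the entries `x_{ji}` of an `(n+k) × n` matrix `X`. -/
inductive LeavittGen (n k : ℕ) : Type
  | y : Fin n → Fin (n + k) → LeavittGen n k
  | x : Fin (n + k) → Fin n → LeavittGen n k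

/-- The defining relations of `L_K(n, n+k)`: `Y X = I_n` and `X Y = I_{n+k}`. -/
inductive LeavittRel (K : Type) [CommRing K] (n k : ℕ) :
    FreeAlgebra K (LeavittGen n k) → FreeAlgebra K (LeavittGen n k) → Prop
  | YX (i i' : Fin n) :
      LeavittRel K n k
        (∑ j : Fin (n + k),
          FreeAlgebra.ι K (LeavittGen.y i j) * FreeAlgebra.ι K (LeavittGen.x j i'))
        (if i = i' then 1 else 0)
  | XY (j j' : Fin (n + k)) :
      LeavittRel K n k
        (∑ i : Fin n,
          FreeAlgebra.ι K (LeavittGen.x j i) * FreeAlgebra.ι K (LeavittGen.y i j'))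
        (if j = j' then 1 else 0)

/-- The Leavitt algebra `L_K(n, n+k)`. -/
abbrev Leavitt (K : Type) [CommRing K] (n k : ℕ) : Type := RingQuot (LeavittRel K n k)

/-- The images of the generators in `L_K(n, n+k)`. -/
noncomputable def leavittGen (K : Type) [CommRing K] (n k : ℕ) (g : LeavittGen n k) :
    Leavitt K n k :=
  RingQuot.mkAlgHom K (LeavittRel K n k) (FreeAlgebra.ι K g)

/-- Generators of the weighted Leavitt path algebra of the weighted graph with one
vertex and `n+k` loops, each of weight `n`: the edges `(y_α)_i` and their ghosts
`(y_α)_i*` for `α ∈ Fin (n+k)`, `i ∈ Fin n`.  (Since the graph has a single vertex `v`,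
the vertex generator is the identity of the algebra.) -/
inductive RoseGen (n k : ℕ) : Type
  | e : Fin (n + k) → Fin n → RoseGen n k
  | star : Fin (n + k) → Fin n → RoseGen n k

/-- Relations (3) and (4) of the weighted Leavitt path algebra for the rose with
`n+k` loops of weight `n`:
`Σ_α α_i α_j* = δ_{ij} v` and `Σ_i α_i* β_i = δ_{αβ} v`, with `v = 1`. -/
inductive RoseRel (K : Type) [CommRing K] (n k : ℕ) :
    FreeAlgebra K (RoseGen n k) → FreeAlgebra K (RoseGen n k) → Prop
  | CK1 (i j : Fin n) :
      RoseRel K n k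
        (∑ α : Fin (n + k),
          FreeAlgebra.ι K (RoseGen.e α i) * FreeAlgebra.ι K (RoseGen.star α j))
        (if i = j then 1 else 0)
  | CK2 (α β : Fin (n + k)) :
      RoseRel K n k
        (∑ i : Fin n,
          FreeAlgebra.ι K (RoseGen.star α i) * FreeAlgebra.ι K (RoseGen.e β i))
        (if α = β then 1 else 0)

/-- The weighted Leavitt path algebra of the weighted graph with one vertex and `n+k`
loops, each of weight `n`. -/
abbrev WRose (K : Type) [CommRing K] (n k : ℕ) : Type := RingQuot (RoseRel K n k)

noncomputable def wroseGen (K : Type) [CommRing K] (n k : ℕ) (g : RoseGen n k) :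
    WRose K n k :=
  RingQuot.mkAlgHom K (RoseRel K n k) (FreeAlgebra.ι K g)

section Aux

variable (K : Type) [CommRing K] (n k : ℕ)

noncomputable def roseToLeavittFree : FreeAlgebra K (RoseGen n k) →ₐ[K] Leavitt K n k :=
  FreeAlgebra.lift K fun g => leavittGen K n k (match g with
    | RoseGen.e α i => LeavittGen.y i α
    | RoseGen.star α i => LeavittGen.x α i)

noncomputable def leavittToRoseFree : FreeAlgebra K (LeavittGen n k) →ₐ[K] WRose K n k :=
  FreeAlgebra.lift K fun g => wroseGen K n k (match g with
    | LeavittGen.y i α => RoseGen.e α i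
    | LeavittGen.x α i => RoseGen.star α i)

theorem roseToLeavitt_rel : ∀ ⦃x y⦄, RoseRel K n k x y →
    roseToLeavittFree K n k x = roseToLeavittFree K n k y := by
  intro x y h
  cases h with
  | CK1 i j =>
    have h := RingQuot.mkAlgHom_rel K (LeavittRel.YX (K := K) (k := k) i j)
    simp only [map_sum, map_mul, map_one, map_zero, apply_ite] at h ⊢
    simpa [roseToLeavittFree, leavittGen] using h
  | CK2 α β =>
    have h := RingQuot.mkAlgHom_rel K (LeavittRel.XY (K := K) (n := n) α β)
    simp only [map_sum, map_mul, map_one, map_zero, apply_ite] at h ⊢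
    simpa [roseToLeavittFree, leavittGen] using h

theorem leavittToRose_rel : ∀ ⦃x y⦄, LeavittRel K n k x y →
    leavittToRoseFree K n k x = leavittToRoseFree K n k y := by
  intro x y h
  cases h with
  | YX i i' =>
    have h := RingQuot.mkAlgHom_rel K (RoseRel.CK1 (K := K) (k := k) i i')
    simp only [map_sum, map_mul, map_one, map_zero, apply_ite] at h ⊢
    simpa [leavittToRoseFree, wroseGen] using h
  | XY j j' =>
    have h := RingQuot.mkAlgHom_rel K (RoseRel.CK2 (K := K) (n := n) j j')
    simp only [map_sum, map_mul, map_one, map_zero, apply_ite] at h ⊢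
    simpa [leavittToRoseFree, wroseGen] using h

noncomputable def roseToLeavitt : WRose K n k →ₐ[K] Leavitt K n k :=
  RingQuot.liftAlgHom K ⟨roseToLeavittFree K n k, roseToLeavitt_rel K n k⟩

noncomputable def leavittToRose : Leavitt K n k →ₐ[K] WRose K n k :=
  RingQuot.liftAlgHom K ⟨leavittToRoseFree K n k, leavittToRose_rel K n k⟩

theorem roseToLeavitt_gen (g : RoseGen n k) :
    roseToLeavitt K n k (wroseGen K n k g) = leavittGen K n k (match g with
      | RoseGen.e α i => LeavittGen.y i α
      | RoseGen.star α i => LeavittGen.x α i) := by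
  simp [roseToLeavitt, wroseGen, RingQuot.liftAlgHom_mkAlgHom_apply, roseToLeavittFree]

theorem leavittToRose_gen (g : LeavittGen n k) :
    leavittToRose K n k (leavittGen K n k g) = wroseGen K n k (match g with
      | LeavittGen.y i α => RoseGen.e α i
      | LeavittGen.x α i => RoseGen.star α i) := by
  simp [leavittToRose, leavittGen, RingQuot.liftAlgHom_mkAlgHom_apply, leavittToRoseFree]

end Aux

/-- For a field `K`, the weighted Leavitt path algebra of the weighted
graph with one vertex and `n+k` loops each of weight `n` is isomorphic as a `K`-algebra
to the Leavitt algebra `L_K(n, n+k)`; the isomorphism identifies `(y_α)_i` with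
`y_{iα}` and `(y_α)_i*` with `x_{αi}`. -/
theorem wrose_iso_leavitt (K : Type) [Field K] (n k : ℕ) (hn : 0 < n) :
    ∃ φ : WRose K n k ≃ₐ[K] Leavitt K n k,
      (∀ (α : Fin (n + k)) (i : Fin n),
        φ (wroseGen K n k (RoseGen.e α i)) = leavittGen K n k (LeavittGen.y i α)) ∧
      (∀ (α : Fin (n + k)) (i : Fin n),
        φ (wroseGen K n k (RoseGen.star α i)) = leavittGen K n k (LeavittGen.x α i)) := by
  refine ⟨AlgEquiv.ofAlgHom (roseToLeavitt K n k) (leavittToRose K n k) ?_ ?_, ?_, ?_⟩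
  · refine RingQuot.ringQuot_ext' K _ _ (FreeAlgebra.hom_ext ?_)
    funext g
    cases g with
    | y i α =>
        show roseToLeavitt K n k (leavittToRose K n k (leavittGen K n k (LeavittGen.y i α))) =
          leavittGen K n k (LeavittGen.y i α)
        rw [leavittToRose_gen, roseToLeavitt_gen]
    | x α i =>
        show roseToLeavitt K n k (leavittToRose K n k (leavittGen K n k (LeavittGen.x α i))) =
          leavittGen K n k (LeavittGen.x α i)
        rw [leavittToRose_gen, roseToLeavitt_gen]
  · refine RingQuot.ringQuot_ext' K _ _ (FreeAlgebra.hom_ext ?_)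
    funext g
    cases g with
    | e α i =>
        show leavittToRose K n k (roseToLeavitt K n k (wroseGen K n k (RoseGen.e α i))) =
          wroseGen K n k (RoseGen.e α i)
        rw [roseToLeavitt_gen, leavittToRose_gen]
    | star α i =>
        show leavittToRose K n k (roseToLeavitt K n k (wroseGen K n k (RoseGen.star α i))) =
          wroseGen K n k (RoseGen.star α i)
        rw [roseToLeavitt_gen, leavittToRose_gen]
  · intro α i; exact roseToLeavitt_gen K n k (RoseGen.e α i)
  · intro α i; exact roseToLeavitt_gen K n k (RoseGen.star α i)
end

section
/- For a field K and integers n ≥ 1, k ≥ 0, the assignment y_{1i} ↦ y_i, x_{i1} ↦ y_i* for 1 ≤ i ≤ k+1, y_{i,i+k} ↦ 1, x_{i+k,i} ↦ 1 for 2 ≤ i ≤ n, and all other generators to 0, induces a surjective K-algebra homomorphism L_K(n, n+k) → L_K(1, k+1). -/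
noncomputable section Aux

variable (K : Type) [Field K] (n k : ℕ)

/-- `Y_m` extended by zero. -/
def Ya (m : ℕ) : Leavitt K 1 k :=
  if h : m < 1 + k then leavittGen K 1 k (LeavittGen.y 0 ⟨m, h⟩) else 0

/-- `X_m` extended by zero. -/
def Xa (m : ℕ) : Leavitt K 1 k :=
  if h : m < 1 + k then leavittGen K 1 k (LeavittGen.x ⟨m, h⟩ 0) else 0

def phi : LeavittGen n k → Leavitt K 1 k
  | .y i j => if (i : ℕ) = 0 then Ya K k j else if (j : ℕ) = (i : ℕ) + k then 1 else 0
  | .x j i => if (i : ℕ) = 0 then Xa K k j else if (j : ℕ) = (i : ℕ) + k then 1 else 0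

lemma tYX : ∑ j : Fin (1 + k),
    leavittGen K 1 k (LeavittGen.y 0 j) * leavittGen K 1 k (LeavittGen.x j 0) = 1 := by
  have := RingQuot.mkAlgHom_rel K (LeavittRel.YX (K := K) (n := 1) (k := k) 0 0)
  simpa [leavittGen, map_sum] using this

lemma tXY (j j' : Fin (1 + k)) :
    leavittGen K 1 k (LeavittGen.x j 0) * leavittGen K 1 k (LeavittGen.y 0 j') =
      if j = j' then 1 else 0 := by
  have := RingQuot.mkAlgHom_rel K (LeavittRel.XY (K := K) (n := 1) (k := k) j j')
  simpa [leavittGen, map_sum, Fin.sum_univ_one, apply_ite] using this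

def f0 : FreeAlgebra K (LeavittGen n k) →ₐ[K] Leavitt K 1 k :=
  FreeAlgebra.lift K (phi K n k)

lemma f0_rel (hn : 0 < n) {a b : FreeAlgebra K (LeavittGen n k)}
    (h : LeavittRel K n k a b) : f0 K n k a = f0 K n k b := by
  induction h with
  | YX i i' =>
      simp only [f0, map_sum, map_mul, FreeAlgebra.lift_ι_apply]
      rcases Nat.eq_zero_or_pos (i : ℕ) with hi | hi
      · rcases Nat.eq_zero_or_pos (i' : ℕ) with hi' | hi'
        · -- both zero
          have hii : i = i' := Fin.ext (by omega)
          rw [if_pos hii, map_one]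
          simp only [phi, hi, hi', eq_self_iff_true, if_true]
          rw [Fin.sum_univ_eq_sum_range (fun m => Ya K k m * Xa K k m),
            ← Finset.sum_subset (Finset.range_subset_range.2 (by omega : 1 + k ≤ n + k))
              (fun m _ hm => by
                simp only [Finset.mem_range, not_lt] at hm
                simp [Ya, dif_neg (by omega : ¬ m < 1 + k)]),
            ← Fin.sum_univ_eq_sum_range (fun m => Ya K k m * Xa K k m)]
          rw [← tYX K k]
          refine Finset.sum_congr rfl fun j _ => ?_
          simp [Ya, Xa, j.isLt]
        · -- i = 0, i' ≥ 1
          rw [if_neg (fun h => by rw [h] at hi; omega), map_zero]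
          refine Finset.sum_eq_zero fun j _ => ?_
          simp only [phi, hi, eq_self_iff_true, if_true,
            if_neg (by omega : ¬ (i' : ℕ) = 0)]
          rcases eq_or_ne (j : ℕ) ((i' : ℕ) + k) with hj | hj
          · rw [if_pos hj, mul_one, Ya, dif_neg (by omega : ¬ (j : ℕ) < 1 + k)]
          · rw [if_neg hj, mul_zero]
      · rcases Nat.eq_zero_or_pos (i' : ℕ) with hi' | hi'
        · -- i ≥ 1, i' = 0
          rw [if_neg (fun h => by rw [h] at hi; omega), map_zero]
          refine Finset.sum_eq_zero fun j _ => ?_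
          simp only [phi, hi', eq_self_iff_true, if_true,
            if_neg (by omega : ¬ (i : ℕ) = 0)]
          rcases eq_or_ne (j : ℕ) ((i : ℕ) + k) with hj | hj
          · rw [if_pos hj, one_mul, Xa, dif_neg (by omega : ¬ (j : ℕ) < 1 + k)]
          · rw [if_neg hj, zero_mul]
        · -- both ≥ 1
          have key : ∀ j : Fin (n + k), j ≠ ⟨(i : ℕ) + k, by omega⟩ →
              phi K n k (.y i j) * phi K n k (.x j i') = 0 := fun j hj => by
            simp only [phi, if_neg (by omega : ¬ (i : ℕ) = 0)]
            rw [if_neg (fun h => hj (Fin.ext (by simpa using h))), zero_mul]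
          rw [Fintype.sum_eq_single _ key]
          simp only [phi, if_neg (by omega : ¬ (i : ℕ) = 0),
            if_neg (by omega : ¬ (i' : ℕ) = 0)]
          by_cases hii : i = i'
          · rw [if_pos hii, map_one, if_pos (by simp [hii]), one_mul,
              if_pos (by simp [hii])]
          · rw [if_neg hii, map_zero, if_pos (by simp), one_mul,
              if_neg (by simpa using fun h => hii (Fin.ext (by omega)))]
  | XY j j' =>
      simp only [f0, map_sum, map_mul, FreeAlgebra.lift_ι_apply]
      rcases Nat.lt_or_ge (j : ℕ) (1 + k) with hj | hj
      · -- j < 1 + k : single term at i = 0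
        have key : ∀ i : Fin n, i ≠ ⟨0, hn⟩ →
            phi K n k (.x j i) * phi K n k (.y i j') = 0 := fun i hi => by
          have hi0 : (i : ℕ) ≠ 0 := fun h => hi (Fin.ext (by simpa using h))
          simp only [phi, if_neg hi0]
          rw [if_neg (by omega : ¬ (j : ℕ) = (i : ℕ) + k), zero_mul]
        rw [Fintype.sum_eq_single _ key]
        simp only [phi, Fin.val_mk, eq_self_iff_true, if_true]
        rcases Nat.lt_or_ge (j' : ℕ) (1 + k) with hj' | hj'
        · rw [Ya, dif_pos hj', Xa, dif_pos hj, tXY]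
          by_cases hjj : j = j'
          · rw [if_pos (by simp [hjj]), if_pos hjj, map_one]
          · rw [if_neg (by simpa [Fin.ext_iff] using fun h => hjj (Fin.ext h)),
              if_neg hjj, map_zero]
        · rw [Ya, dif_neg (by omega : ¬ (j' : ℕ) < 1 + k), mul_zero,
            if_neg (by simpa [Fin.ext_iff] using by omega), map_zero]
      · -- j ≥ 1 + k : single term at i = j - k
        have hjk : (j : ℕ) - k < n := by omega
        have key : ∀ i : Fin n, i ≠ ⟨(j : ℕ) - k, hjk⟩ →
            phi K n k (.x j i) * phi K n k (.y i j') = 0 := fun i hi => by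
          have hi0 : (i : ℕ) ≠ (j : ℕ) - k := fun h => hi (Fin.ext (by simpa using h))
          simp only [phi]
          by_cases h0 : (i : ℕ) = 0
          · rw [if_pos h0, Xa, dif_neg (by omega : ¬ (j : ℕ) < 1 + k), zero_mul]
          · rw [if_neg h0, if_neg (by omega : ¬ (j : ℕ) = (i : ℕ) + k), zero_mul]
        rw [Fintype.sum_eq_single _ key]
        simp only [phi, Fin.val_mk, if_neg (by omega : ¬ (j : ℕ) - k = 0)]
        rw [if_pos (by omega : (j : ℕ) = (j : ℕ) - k + k), one_mul]
        by_cases hjj : j = j'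
        · rw [if_pos (by simp only [Fin.ext_iff] at hjj; omega), if_pos hjj, map_one]
        · rw [if_neg (by
            simp only [Fin.ext_iff] at hjj
            omega), if_neg hjj, map_zero]

end Aux


section Main

variable (K : Type) [Field K] (n k : ℕ) (hn : 0 < n)

noncomputable def fmap : Leavitt K n k →ₐ[K] Leavitt K 1 k :=
  RingQuot.liftAlgHom K ⟨f0 K n k, fun _ _ h => f0_rel K n k hn h⟩

lemma fmap_gen (g : LeavittGen n k) : fmap K n k hn (leavittGen K n k g) = phi K n k g := by
  simp [fmap, leavittGen, RingQuot.liftAlgHom_mkAlgHom_apply, f0, FreeAlgebra.lift_ι_apply]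

lemma fmap_surj : Function.Surjective (fmap K n k hn) := by
  have hsur_gen : ∀ g : LeavittGen 1 k, leavittGen K 1 k g ∈ (fmap K n k hn).range := by
    intro g
    cases g with
    | y i j =>
        have hi : i = 0 := Subsingleton.elim _ _
        subst hi
        refine ⟨leavittGen K n k (.y ⟨0, hn⟩ ⟨(j : ℕ), by omega⟩), ?_⟩
        show fmap K n k hn _ = _
        rw [fmap_gen]
        simp only [phi, Fin.val_mk, eq_self_iff_true, if_true, Ya, dif_pos j.isLt]
    | x j i =>
        have hi : i = 0 := Subsingleton.elim _ _
        subst hi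
        refine ⟨leavittGen K n k (.x ⟨(j : ℕ), by omega⟩ ⟨0, hn⟩), ?_⟩
        show fmap K n k hn _ = _
        rw [fmap_gen]
        simp only [phi, Fin.val_mk, eq_self_iff_true, if_true, Xa, dif_pos j.isLt]
  rw [← AlgHom.range_eq_top, eq_top_iff]
  rintro x -
  obtain ⟨a, rfl⟩ := RingQuot.mkAlgHom_surjective K (LeavittRel K 1 k) x
  induction a using FreeAlgebra.induction with
  | grade0 r =>
      rw [AlgHom.commutes]
      exact Subalgebra.algebraMap_mem _ r
  | grade1 g => exact hsur_gen g
  | mul a b ha hb => rw [map_mul]; exact Subalgebra.mul_mem _ ha hb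
  | add a b ha hb => rw [map_add]; exact Subalgebra.add_mem _ ha hb

end Main

/-- For a field `K` and `n ≥ 1`, `k ≥ 0`, the assignment
`y_{1i} ↦ y_i`, `x_{i1} ↦ y_i*` for `1 ≤ i ≤ k+1`, `y_{i,i+k} ↦ 1`, `x_{i+k,i} ↦ 1` for
`2 ≤ i ≤ n`, and all other generators to `0`, induces a surjective `K`-algebra
homomorphism `L_K(n, n+k) → L_K(1, k+1)`.  (Indices are `0`-based below: the generator
`y_{1i}` of the statement is `y ⟨0⟩ j` with `j < k+1`, and `y_{i,i+k}` with `2 ≤ i ≤ n`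
is `y i ⟨i+k⟩` with `1 ≤ i`.) -/
theorem leavitt_surjection (K : Type) [Field K] (n k : ℕ) (hn : 0 < n) :
    ∃ f : Leavitt K n k →ₐ[K] Leavitt K 1 k,
      Function.Surjective f ∧
      (∀ (j : Fin (n + k)) (hj : (j : ℕ) < k + 1),
        f (leavittGen K n k (LeavittGen.y ⟨0, hn⟩ j)) =
          leavittGen K 1 k (LeavittGen.y 0 ⟨(j : ℕ), by omega⟩)) ∧
      (∀ (j : Fin (n + k)) (hj : (j : ℕ) < k + 1),
        f (leavittGen K n k (LeavittGen.x j ⟨0, hn⟩)) =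
          leavittGen K 1 k (LeavittGen.x ⟨(j : ℕ), by omega⟩ 0)) ∧
      (∀ (i : Fin n), 1 ≤ (i : ℕ) →
        f (leavittGen K n k (LeavittGen.y i ⟨(i : ℕ) + k, by omega⟩)) = 1) ∧
      (∀ (i : Fin n), 1 ≤ (i : ℕ) →
        f (leavittGen K n k (LeavittGen.x ⟨(i : ℕ) + k, by omega⟩ i)) = 1) ∧
      (∀ (i : Fin n) (j : Fin (n + k)),
        ¬((i : ℕ) = 0 ∧ (j : ℕ) < k + 1) → ¬(1 ≤ (i : ℕ) ∧ (j : ℕ) = (i : ℕ) + k) →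
          f (leavittGen K n k (LeavittGen.y i j)) = 0) ∧
      (∀ (i : Fin n) (j : Fin (n + k)),
        ¬((i : ℕ) = 0 ∧ (j : ℕ) < k + 1) → ¬(1 ≤ (i : ℕ) ∧ (j : ℕ) = (i : ℕ) + k) →
          f (leavittGen K n k (LeavittGen.x j i)) = 0) := by
  refine ⟨fmap K n k hn, fmap_surj K n k hn, ?_, ?_, ?_, ?_, ?_, ?_⟩
  · intro j hj
    rw [fmap_gen]
    simp only [phi, Fin.val_mk, eq_self_iff_true, if_true, Ya, dif_pos (by omega : (j : ℕ) < 1 + k)]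
  · intro j hj
    rw [fmap_gen]
    simp only [phi, Fin.val_mk, eq_self_iff_true, if_true, Xa, dif_pos (by omega : (j : ℕ) < 1 + k)]
  · intro i hi
    rw [fmap_gen]
    simp only [phi, Fin.val_mk, if_neg (by omega : ¬ (i : ℕ) = 0), eq_self_iff_true, if_true]
  · intro i hi
    rw [fmap_gen]
    simp only [phi, Fin.val_mk, if_neg (by omega : ¬ (i : ℕ) = 0), eq_self_iff_true, if_true]
  · intro i j h1 h2
    rw [fmap_gen]
    by_cases h0 : (i : ℕ) = 0
    · simp only [phi, h0, eq_self_iff_true, if_true, Ya,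
        dif_neg (by omega : ¬ (j : ℕ) < 1 + k)]
    · simp only [phi, if_neg h0, if_neg (by omega : ¬ (j : ℕ) = (i : ℕ) + k)]
  · intro i j h1 h2
    rw [fmap_gen]
    by_cases h0 : (i : ℕ) = 0
    · simp only [phi, h0, eq_self_iff_true, if_true, Xa,
        dif_neg (by omega : ¬ (j : ℕ) < 1 + k)]
    · simp only [phi, if_neg h0, if_neg (by omega : ¬ (j : ℕ) = (i : ℕ) + k)]
end

section
/- The weighted Leavitt path algebra over a ring R of a weighted graph consisting of one vertex and one structured edge of weight n is isomorphic to the Leavitt path algebra over R of the unweighted graph with one vertex and n loops. -/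
/-- The free unital `R`-ring on a set `X` (for a possibly noncommutative ring `R`). -/
abbrev FreeURng (R X : Type) [Ring R] : Type := MonoidAlgebra R (FreeMonoid X)

noncomputable def ofu {R X : Type} [Ring R] (x : X) : FreeURng R X :=
  MonoidAlgebra.single (FreeMonoid.of x) 1

section Aux

variable {A B : Type} [Ring A] [Ring B]

/-- Lift a ring hom through a `RingCon` quotient. -/
noncomputable def ringConLift (c : RingCon A) (f : A →+* B)
    (h : ∀ x y, c x y → f x = f y) : c.Quotient →+* B where
  toFun x := Quotient.liftOn' x f h
  map_one' := by show f 1 = 1; rw [map_one]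
  map_mul' x y := Quotient.inductionOn₂' x y fun a b => by
    show f (a * b) = f a * f b
    rw [map_mul]
  map_zero' := by show f 0 = 0; rw [map_zero]
  map_add' x y := Quotient.inductionOn₂' x y fun a b => by
    show f (a + b) = f a + f b
    rw [map_add]

@[simp] lemma ringConLift_mk (c : RingCon A) (f : A →+* B)
    (h : ∀ x y, c x y → f x = f y) (a : A) :
    ringConLift c f h (c.toQuotient a) = f a := rfl

variable {R X Y : Type} [Ring R]

/-- The ring hom on free unital rings induced by a map on generators. -/
noncomputable def freeSubst (R : Type) [Ring R] (σ : X → Y) :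
    FreeURng R X →+* FreeURng R Y :=
  MonoidAlgebra.mapDomainRingHom R (FreeMonoid.map σ)

@[simp] lemma freeSubst_ofu (σ : X → Y) (x : X) :
    freeSubst R σ (ofu x) = ofu (σ x) := by
  simp [freeSubst, ofu, Finsupp.mapDomain_single]

lemma freeSubst_comp_eq_id (σ : X → Y) (τ : Y → X) (h : τ ∘ σ = id)
    (x : FreeURng R X) : freeSubst R τ (freeSubst R σ x) = x := by
  have e : (freeSubst R τ).comp (freeSubst R σ) = RingHom.id _ := by
    rw [freeSubst, freeSubst, ← MonoidAlgebra.mapDomainRingHom_comp, ← FreeMonoid.map_comp, h,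
      FreeMonoid.map_id, MonoidAlgebra.mapDomainRingHom_id]
  exact RingHom.congr_fun e x

/-- A ring hom into the target factors through the quotient once it kills a
generating set of the defining ideal. -/
lemma welldef_of_rels {S : Set A} (f : A →+* B) (hf : ∀ z ∈ S, f z = 0) :
    ∀ x y, (TwoSidedIdeal.span S).ringCon x y → f x = f y := by
  intro x y hxy
  have hmem : x - y ∈ TwoSidedIdeal.span S := (TwoSidedIdeal.rel_iff _ _ _).mp hxy
  have h0 : x - y ∈ TwoSidedIdeal.ker f :=
    TwoSidedIdeal.mem_span_iff.mp hmem (TwoSidedIdeal.ker f)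
      (fun z hz => (TwoSidedIdeal.mem_ker f).mpr (hf z hz))
  have := (TwoSidedIdeal.mem_ker f).mp h0
  rw [map_sub] at this
  exact sub_eq_zero.mp this

lemma mk_rel_zero {S : Set A} {z : A} (hz : z ∈ S) :
    (TwoSidedIdeal.span S).ringCon.toQuotient z = 0 := by
  have : z ∈ TwoSidedIdeal.ker (RingCon.mk' (TwoSidedIdeal.span S).ringCon) := by
    rw [TwoSidedIdeal.ker_ringCon_mk']
    exact TwoSidedIdeal.subset_span hz
  exact (TwoSidedIdeal.mem_ker _).mp this

end Aux

/-- Generators of the weighted Leavitt path algebra of the weighted graph with one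
vertex and one structured edge `α` of weight `n`: the edges `α_1, …, α_n` and the ghost
edges `α_1*, …, α_n*` (the unique vertex is the identity). -/
inductive WR1Gen (n : ℕ) : Type
  | a : Fin n → WR1Gen n
  | astar : Fin n → WR1Gen n

open Classical in
/-- Relations of `L_R(E, ω)` for one vertex and one structured edge of weight `n`:
`α_i α_j* = δ_{ij} 1` and `Σ_i α_i* α_i = 1`. -/
noncomputable def WR1Rels (R : Type) [Ring R] (n : ℕ) : Set (FreeURng R (WR1Gen n)) :=
  {z | ∃ i j : Fin n,
      z = ofu (WR1Gen.a i) * ofu (WR1Gen.astar j) - if i = j then 1 else 0} ∪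
  {∑ i : Fin n, ofu (WR1Gen.astar i) * ofu (WR1Gen.a i) - 1}

/-- The weighted Leavitt path algebra of the rose with one structured edge of weight `n`. -/
abbrev WR1 (R : Type) [Ring R] (n : ℕ) : Type :=
  (TwoSidedIdeal.span (WR1Rels R n)).ringCon.Quotient

noncomputable def wr1Gen (R : Type) [Ring R] (n : ℕ) (g : WR1Gen n) : WR1 R n :=
  (TwoSidedIdeal.span (WR1Rels R n)).ringCon.toQuotient (ofu g)

/-- Generators of the Leavitt path algebra of the unweighted rose with `n` loops
`e_1, …, e_n`: the loops and their ghosts. -/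
inductive RoseNGen (n : ℕ) : Type
  | e : Fin n → RoseNGen n
  | estar : Fin n → RoseNGen n

open Classical in
/-- Relations of the Leavitt path algebra of the rose with `n` loops:
`e_i* e_j = δ_{ij} 1` and `Σ_i e_i e_i* = 1`. -/
noncomputable def RoseNRels (R : Type) [Ring R] (n : ℕ) : Set (FreeURng R (RoseNGen n)) :=
  {z | ∃ i j : Fin n,
      z = ofu (RoseNGen.estar i) * ofu (RoseNGen.e j) - if i = j then 1 else 0} ∪
  {∑ i : Fin n, ofu (RoseNGen.e i) * ofu (RoseNGen.estar i) - 1}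

/-- The Leavitt path algebra of the unweighted rose with `n` loops. -/
abbrev RoseN (R : Type) [Ring R] (n : ℕ) : Type :=
  (TwoSidedIdeal.span (RoseNRels R n)).ringCon.Quotient

noncomputable def roseNGen (R : Type) [Ring R] (n : ℕ) (g : RoseNGen n) : RoseN R n :=
  (TwoSidedIdeal.span (RoseNRels R n)).ringCon.toQuotient (ofu g)

/-- Generator swap `α_i ↦ e_i*`, `α_i* ↦ e_i`. -/
def sigAB (n : ℕ) : WR1Gen n → RoseNGen n
  | .a i => .estar i
  | .astar i => .e i

/-- Generator swap `e_i ↦ α_i*`, `e_i* ↦ α_i`. -/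
def sigBA (n : ℕ) : RoseNGen n → WR1Gen n
  | .e i => .astar i
  | .estar i => .a i

/-- Over a ring `R`, the weighted Leavitt path algebra of the weighted
graph with one vertex and one structured edge of weight `n` is isomorphic to the Leavitt
path algebra of the unweighted graph with one vertex and `n` loops; the isomorphism
sends `α_i` to `e_i*` (and `α_i*` to `e_i`). -/
theorem wr1_iso_roseN (R : Type) [Ring R] (n : ℕ) :
    ∃ φ : WR1 R n ≃+* RoseN R n,
      (∀ i : Fin n, φ (wr1Gen R n (WR1Gen.a i)) = roseNGen R n (RoseNGen.estar i)) ∧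
      (∀ i : Fin n, φ (wr1Gen R n (WR1Gen.astar i)) = roseNGen R n (RoseNGen.e i)) := by
  classical
  set cA := (TwoSidedIdeal.span (WR1Rels R n)).ringCon with hcA
  set cB := (TwoSidedIdeal.span (RoseNRels R n)).ringCon with hcB
  set Φ := freeSubst R (sigAB n) with hΦ
  set Ψ := freeSubst R (sigBA n) with hΨ
  -- The substitutions send relations to relations.
  have hΦrels : ∀ z ∈ WR1Rels R n, Φ z ∈ RoseNRels R n := by
    rintro z (⟨i, j, rfl⟩ | rfl)
    · refine Or.inl ⟨i, j, ?_⟩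
      rw [map_sub, map_mul, freeSubst_ofu, freeSubst_ofu]
      show _ - Φ _ = _
      congr 1
      split_ifs <;> simp
    · refine Or.inr ?_
      show Φ _ ∈ ({_} : Set _)
      rw [Set.mem_singleton_iff, map_sub, map_one, map_sum]
      congr 1
      refine Finset.sum_congr rfl fun i _ => ?_
      rw [map_mul, freeSubst_ofu, freeSubst_ofu]
      rfl
  have hΨrels : ∀ z ∈ RoseNRels R n, Ψ z ∈ WR1Rels R n := by
    rintro z (⟨i, j, rfl⟩ | rfl)
    · refine Or.inl ⟨i, j, ?_⟩
      rw [map_sub, map_mul, freeSubst_ofu, freeSubst_ofu]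
      show _ - Ψ _ = _
      congr 1
      split_ifs <;> simp
    · refine Or.inr ?_
      show Ψ _ ∈ ({_} : Set _)
      rw [Set.mem_singleton_iff, map_sub, map_one, map_sum]
      congr 1
      refine Finset.sum_congr rfl fun i _ => ?_
      rw [map_mul, freeSubst_ofu, freeSubst_ofu]
      rfl
  -- The induced ring homs into the quotients.
  set φ₀ : FreeURng R (WR1Gen n) →+* RoseN R n := (RingCon.mk' cB).comp Φ with hφ₀
  set ψ₀ : FreeURng R (RoseNGen n) →+* WR1 R n := (RingCon.mk' cA).comp Ψ with hψ₀
  have hφ₀rel : ∀ z ∈ WR1Rels R n, φ₀ z = 0 := fun z hz =>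
    mk_rel_zero (hΦrels z hz)
  have hψ₀rel : ∀ z ∈ RoseNRels R n, ψ₀ z = 0 := fun z hz =>
    mk_rel_zero (hΨrels z hz)
  set φ : WR1 R n →+* RoseN R n := ringConLift cA φ₀ (welldef_of_rels φ₀ hφ₀rel)
    with hφdef
  set ψ : RoseN R n →+* WR1 R n := ringConLift cB ψ₀ (welldef_of_rels ψ₀ hψ₀rel)
    with hψdef
  have hφmk : ∀ x, φ (cA.toQuotient x) = cB.toQuotient (Φ x) := fun x => rfl
  have hψmk : ∀ x, ψ (cB.toQuotient x) = cA.toQuotient (Ψ x) := fun x => rfl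
  have hBA : (sigBA n) ∘ (sigAB n) = id := funext fun g => by cases g <;> rfl
  have hAB : (sigAB n) ∘ (sigBA n) = id := funext fun g => by cases g <;> rfl
  have hli : ∀ x, ψ (φ x) = x := fun x => Quotient.inductionOn' x fun a => by
    show ψ (φ (cA.toQuotient a)) = cA.toQuotient a
    rw [hφmk, hψmk, freeSubst_comp_eq_id (sigAB n) (sigBA n) hBA]
  have hri : ∀ x, φ (ψ x) = x := fun x => Quotient.inductionOn' x fun a => by
    show φ (ψ (cB.toQuotient a)) = cB.toQuotient a
    rw [hψmk, hφmk, freeSubst_comp_eq_id (sigBA n) (sigAB n) hAB]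
  refine ⟨⟨⟨⇑φ, ⇑ψ, hli, hri⟩, map_mul φ, map_add φ⟩, fun i => ?_, fun i => ?_⟩
  · show φ (cA.toQuotient (ofu (WR1Gen.a i))) = _
    rw [hφmk, freeSubst_ofu]
    rfl
  · show φ (cA.toQuotient (ofu (WR1Gen.astar i))) = _
    rw [hφmk, freeSubst_ofu]
    rfl
end

section
/- If (E, ω) is a reducible weighted graph and R a ring, then L_R(E, ω) is isomorphic to the Leavitt path algebra L_R(F), where F is the unweighted graph associated with (E, ω), obtained by keeping each edge α_i whose source lies outside the weight forest and reversing each edge α_i whose source lies in the weight forest. -/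
/-- A weighted graph: vertices, structured edges with source, range and weight. -/
structure WGraph : Type 1 where
  V : Type
  St : Type
  src : St → V
  rng : St → V
  wt : St → ℕ
  wt_pos : ∀ α, 0 < wt α

namespace WGraph

variable (G : WGraph)

/-- The set of edges `E¹ = ⊔_α {α_1, …, α_{ω(α)}}`. -/
def E : Type := Σ α : G.St, Fin (G.wt α)

/-- Generators of the weighted Leavitt path algebra: vertices, edges and ghost edges. -/
inductive Gen (G : WGraph) : Type
  | vert : G.V → Gen G
  | edge : G.E → Gen G
  | star : G.E → Gen G

/-- The free (non-unital) `R`-ring on the generators. -/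
abbrev FreeRng (R : Type) [Ring R] (G : WGraph) : Type :=
  MonoidAlgebra R (FreeSemigroup (Gen G))

variable (R : Type) [Ring R]

noncomputable def of (x : Gen G) : FreeRng R G :=
  MonoidAlgebra.single (FreeSemigroup.of x) 1

/-- `α_i`, interpreted as `0` when `i ≥ ω(α)` (`0`-indexed). -/
noncomputable def edgeT (α : G.St) (i : ℕ) : FreeRng R G :=
  if h : i < G.wt α then G.of R (Gen.edge ⟨α, ⟨i, h⟩⟩) else 0

/-- `α_i*`, interpreted as `0` when `i ≥ ω(α)` (`0`-indexed). -/
noncomputable def starT (α : G.St) (i : ℕ) : FreeRng R G :=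
  if h : i < G.wt α then G.of R (Gen.star ⟨α, ⟨i, h⟩⟩) else 0

open Classical in
/-- The defining relations (1)–(4) of the weighted Leavitt path algebra. -/
inductive Rel : FreeRng R G → FreeRng R G → Prop
  | vv (u v : G.V) :
      Rel (G.of R (.vert u) * G.of R (.vert v)) (if u = v then G.of R (.vert u) else 0)
  | src_edge (e : G.E) :
      Rel (G.of R (.vert (G.src e.1)) * G.of R (.edge e)) (G.of R (.edge e))
  | edge_rng (e : G.E) :
      Rel (G.of R (.edge e) * G.of R (.vert (G.rng e.1))) (G.of R (.edge e))
  | rng_star (e : G.E) :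
      Rel (G.of R (.vert (G.rng e.1)) * G.of R (.star e)) (G.of R (.star e))
  | star_src (e : G.E) :
      Rel (G.of R (.star e) * G.of R (.vert (G.src e.1))) (G.of R (.star e))
  | CK1 (v : G.V) (i j : ℕ) (hi : ∃ α, G.src α = v ∧ i < G.wt α)
      (hj : ∃ α, G.src α = v ∧ j < G.wt α) :
      Rel (∑ᶠ α : {α : G.St // G.src α = v}, G.edgeT R α.1 i * G.starT R α.1 j)
          (if i = j then G.of R (.vert v) else 0)
  | CK2 (α β : G.St) :
      Rel (∑ i ∈ Finset.range (max (G.wt α) (G.wt β)), G.starT R α i * G.edgeT R β i)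
          (if α = β then G.of R (.vert (G.rng α)) else 0)

/-- The weighted Leavitt path algebra `L_R(E, ω)`, as a non-unital ring. -/
abbrev LWPA : Type := (ringConGen (G.Rel R)).Quotient

/-- The quotient map from the free `R`-ring onto `L_R(E, ω)`. -/
noncomputable def π (a : FreeRng R G) : G.LWPA R := (ringConGen (G.Rel R)).toQuotient a

/-- `G` is row-finite. -/
def RowFinite : Prop := ∀ v : G.V, {α : G.St | G.src α = v}.Finite

/-- Source of a generator, viewed as a letter of a generalised path. -/
def sOf : Gen G → G.V
  | .vert v => v
  | .edge e => G.src e.1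
  | .star e => G.rng e.1

/-- Range of a generator, viewed as a letter of a generalised path. -/
def rOf : Gen G → G.V
  | .vert v => v
  | .edge e => G.rng e.1
  | .star e => G.src e.1

/-- A choice function `v ↦ α^v` selecting, at every non-sink `v`, a structured edge
emitted by `v` of maximal weight. -/
def IsSelection (sel : G.V → G.St) : Prop :=
  ∀ v : G.V, (∃ α, G.src α = v) →
    G.src (sel v) = v ∧ ∀ β, G.src β = v → G.wt β ≤ G.wt (sel v)

/-- Forbidden adjacent pairs: words of type I (`α^v_i (α^v_j)*`) and
type II (`α_1* β_1`). -/
def BadPair (sel : G.V → G.St) : Gen G → Gen G → Prop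
  | .edge e, .star f => e.1 = f.1 ∧ e.1 = sel (G.src e.1)
  | .star e, .edge f => (e.2 : ℕ) = 0 ∧ (f.2 : ℕ) = 0
  | _, _ => False

/-- The list of letters of a word. -/
def letters (w : FreeSemigroup (Gen G)) : List (Gen G) := w.head :: w.tail

/-- A word is a generalised path: either a single vertex, or a nonempty word in the
edges and ghost edges with matching ranges and sources. -/
def IsGenPath (w : FreeSemigroup (Gen G)) : Prop :=
  (∃ v : G.V, w = FreeSemigroup.of (Gen.vert v)) ∨
  ((∀ x ∈ G.letters w, (∃ e, x = Gen.edge e) ∨ (∃ e, x = Gen.star e)) ∧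
    (G.letters w).Chain' (fun x y => G.rOf x = G.sOf y))

/-- A normal generalised path: a generalised path containing no subword of type I or II. -/
def IsNormal (sel : G.V → G.St) (w : FreeSemigroup (Gen G)) : Prop :=
  G.IsGenPath w ∧ (G.letters w).Chain' (fun x y => ¬ G.BadPair sel x y)

/-- The normal elements of the free `R`-ring: linear combinations of
normal generalised paths. -/
def NormalElems (sel : G.V → G.St) : Set (FreeRng R G) :=
  {a : FreeRng R G | ∀ w ∈ a.coeff.support, G.IsNormal sel w}

end WGraph

/-- A directed graph. -/
structure DGraph : Type 1 where
  V : Type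
  Ed : Type
  src : Ed → V
  rng : Ed → V

namespace DGraph

variable (F : DGraph)

/-- Generators of the Leavitt path algebra: vertices, edges and ghost edges. -/
inductive Gen (F : DGraph) : Type
  | vert : F.V → Gen F
  | edge : F.Ed → Gen F
  | star : F.Ed → Gen F

/-- The free (non-unital) `R`-ring on the generators. -/
abbrev FreeRng (R : Type) [Ring R] (F : DGraph) : Type :=
  MonoidAlgebra R (FreeSemigroup (Gen F))

variable (R : Type) [Ring R]

noncomputable def of (x : Gen F) : FreeRng R F :=
  MonoidAlgebra.single (FreeSemigroup.of x) 1

open Classical in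
/-- The defining relations of the Leavitt path algebra `L_R(E)`. -/
inductive Rel : FreeRng R F → FreeRng R F → Prop
  | vv (u v : F.V) :
      Rel (F.of R (.vert u) * F.of R (.vert v)) (if u = v then F.of R (.vert u) else 0)
  | src_edge (e : F.Ed) :
      Rel (F.of R (.vert (F.src e)) * F.of R (.edge e)) (F.of R (.edge e))
  | edge_rng (e : F.Ed) :
      Rel (F.of R (.edge e) * F.of R (.vert (F.rng e))) (F.of R (.edge e))
  | rng_star (e : F.Ed) :
      Rel (F.of R (.vert (F.rng e)) * F.of R (.star e)) (F.of R (.star e))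
  | star_src (e : F.Ed) :
      Rel (F.of R (.star e) * F.of R (.vert (F.src e))) (F.of R (.star e))
  | CK1 (v : F.V) (hv : ∃ e, F.src e = v) :
      Rel (∑ᶠ e : {e : F.Ed // F.src e = v}, F.of R (.edge e.1) * F.of R (.star e.1))
          (F.of R (.vert v))
  | CK2 (e f : F.Ed) :
      Rel (F.of R (.star e) * F.of R (.edge f))
          (if e = f then F.of R (.vert (F.rng e)) else 0)

/-- The Leavitt path algebra `L_R(E)`, as a non-unital ring. -/
abbrev LPA : Type := (ringConGen (F.Rel R)).Quotient

/-- The quotient map from the free `R`-ring onto `L_R(E)`. -/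
noncomputable def π (a : FreeRng R F) : F.LPA R := (ringConGen (F.Rel R)).toQuotient a

/-- `F` is row-finite. -/
def RowFinite : Prop := ∀ v : F.V, {e : F.Ed | F.src e = v}.Finite

end DGraph

namespace WGraph

variable (G : WGraph)

/-- A vertex is weighted if it emits a structured edge of weight `> 1`. -/
def WeightedVert (v : G.V) : Prop := ∃ α, G.src α = v ∧ 2 ≤ G.wt α

/-- `u ≥ v`: there is a (directed) path from `u` to `v`. -/
def Reaches : G.V → G.V → Prop :=
  Relation.ReflTransGen (fun a b => ∃ α, G.src α = a ∧ G.rng α = b)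

/-- The weight forest: the union of the trees of the weighted vertices. -/
def WForest : Set G.V := {x | ∃ v, G.WeightedVert v ∧ G.Reaches v x}

/-- `(E, ω)` is reducible: it has a weighted vertex, and every vertex `v` of the weight
forest satisfies `|s⁻¹(v)| ≤ 1` and `|r⁻¹(v) ∩ s⁻¹(weight forest)| ≤ 1`. -/
def Reducible : Prop :=
  (∃ v, G.WeightedVert v) ∧
  ∀ v ∈ G.WForest,
    (∀ α β, G.src α = v → G.src β = v → α = β) ∧
    (∀ α β, G.rng α = v → G.rng β = v →
      G.src α ∈ G.WForest → G.src β ∈ G.WForest → α = β)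

open Classical in
/-- The unweighted graph `F` associated with `(E, ω)`: same vertices; each edge
`α_i ∈ E¹` is kept if `s(α) ∉ weight forest` and reversed if `s(α) ∈ weight forest`. -/
noncomputable def assoc : DGraph where
  V := G.V
  Ed := G.E
  src := fun e => if G.src e.1 ∈ G.WForest then G.rng e.1 else G.src e.1
  rng := fun e => if G.src e.1 ∈ G.WForest then G.src e.1 else G.rng e.1

end WGraph

section Transfer

variable {A B : Type*} [NonUnitalNonAssocRing A] [NonUnitalNonAssocRing B]

/-- Pull back a ring congruence along a ring isomorphism. -/
def ringConComap (c : RingCon B) (φ : A ≃+* B) : RingCon A where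
  r a b := c (φ a) (φ b)
  iseqv := ⟨fun _ => c.refl _, fun h => c.symm h, fun h h' => c.trans h h'⟩
  add' h h' := by simpa only [map_add] using c.add h h'
  mul' h h' := by simpa only [map_mul] using c.mul h h'

/-- Transfer an isomorphism of ambient rings to quotients by generated congruences. -/
theorem ringConGen_quot_equiv (φ : A ≃+* B) (r : A → A → Prop) (s : B → B → Prop)
    (hr : ∀ a b, r a b → ringConGen s (φ a) (φ b))
    (hs : ∀ a b, s a b → ringConGen r (φ.symm a) (φ.symm b)) :
    ∃ ψ : (ringConGen r).Quotient ≃+* (ringConGen s).Quotient,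
      ∀ a : A, ψ ((ringConGen r).toQuotient a) = (ringConGen s).toQuotient (φ a) := by
  have h1 : ∀ a b : A, ringConGen r a b → ringConGen s (φ a) (φ b) := fun a b h =>
    (RingCon.ringConGen_le (c := ringConComap (ringConGen s) φ)).mpr (fun x y hxy => hr x y hxy) h
  have h2 : ∀ a b : B, ringConGen s a b → ringConGen r (φ.symm a) (φ.symm b) := fun a b h =>
    (RingCon.ringConGen_le (c := ringConComap (ringConGen r) φ.symm)).mpr (fun x y hxy => hs x y hxy) h
  have hiff : ∀ a b : A, (ringConGen r).toSetoid.r a b ↔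
      (ringConGen s).toSetoid.r (φ a) (φ b) := by
    intro a b
    constructor
    · exact h1 a b
    · intro h
      have := h2 _ _ h
      simpa using this
  refine ⟨{ Quotient.congr φ.toEquiv hiff with map_mul' := ?_, map_add' := ?_ }, fun a => rfl⟩
  · intro x y
    induction x using Quotient.inductionOn' with
    | h a =>
      induction y using Quotient.inductionOn' with
      | h b =>
        show ((φ (a * b) : B) : (ringConGen s).Quotient) = ((φ a * φ b : B) : _)
        rw [map_mul]
  · intro x y
    induction x using Quotient.inductionOn' with
    | h a =>
      induction y using Quotient.inductionOn' with
      | h b =>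
        show ((φ (a + b) : B) : (ringConGen s).Quotient) = ((φ a + φ b : B) : _)
        rw [map_add]

end Transfer
namespace WGraph

variable (G : WGraph)

open Classical in
/-- The forward generator map. -/
noncomputable def genFwd : Gen G → DGraph.Gen G.assoc
  | .vert v => .vert v
  | .edge e => if G.src e.1 ∈ G.WForest then .star e else .edge e
  | .star e => if G.src e.1 ∈ G.WForest then .edge e else .star e

open Classical in
/-- The backward generator map. -/
noncomputable def genBwd : DGraph.Gen G.assoc → Gen G
  | .vert v => .vert v
  | .edge e => if G.src e.1 ∈ G.WForest then .star e else .edge e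
  | .star e => if G.src e.1 ∈ G.WForest then .edge e else .star e

lemma genBwd_genFwd (x : Gen G) : G.genBwd (G.genFwd x) = x := by
  cases x with
  | vert v => rfl
  | edge e => by_cases h : G.src e.1 ∈ G.WForest <;> simp [genFwd, genBwd, h]
  | star e => by_cases h : G.src e.1 ∈ G.WForest <;> simp [genFwd, genBwd, h]

lemma genFwd_genBwd (x : DGraph.Gen G.assoc) : G.genFwd (G.genBwd x) = x := by
  cases x with
  | vert v => rfl
  | edge e => by_cases h : G.src e.1 ∈ G.WForest <;> simp [genFwd, genBwd, h]
  | star e => by_cases h : G.src e.1 ∈ G.WForest <;> simp [genFwd, genBwd, h]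


@[simp] lemma genFwd_vert (v : G.V) : G.genFwd (.vert v) = .vert v := rfl
@[simp] lemma genBwd_vert (v : G.V) : G.genBwd (.vert v) = .vert v := rfl
lemma genFwd_edge_mem {e : G.E} (h : G.src e.1 ∈ G.WForest) :
    G.genFwd (.edge e) = .star e := by simp [genFwd, h]
lemma genFwd_edge_notin {e : G.E} (h : G.src e.1 ∉ G.WForest) :
    G.genFwd (.edge e) = .edge e := by simp [genFwd, h]
lemma genFwd_star_mem {e : G.E} (h : G.src e.1 ∈ G.WForest) :
    G.genFwd (.star e) = .edge e := by simp [genFwd, h]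
lemma genFwd_star_notin {e : G.E} (h : G.src e.1 ∉ G.WForest) :
    G.genFwd (.star e) = .star e := by simp [genFwd, h]
lemma genBwd_edge_mem {e : G.E} (h : G.src e.1 ∈ G.WForest) :
    G.genBwd (.edge e) = .star e := by simp [genBwd, h]
lemma genBwd_edge_notin {e : G.E} (h : G.src e.1 ∉ G.WForest) :
    G.genBwd (.edge e) = .edge e := by simp [genBwd, h]
lemma genBwd_star_mem {e : G.E} (h : G.src e.1 ∈ G.WForest) :
    G.genBwd (.star e) = .edge e := by simp [genBwd, h]
lemma genBwd_star_notin {e : G.E} (h : G.src e.1 ∉ G.WForest) :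
    G.genBwd (.star e) = .star e := by simp [genBwd, h]

variable (R : Type) [Ring R]

/-- The ring isomorphism between the free rings. -/
noncomputable def Phi : G.FreeRng R ≃+* DGraph.FreeRng R G.assoc where
  toFun := MonoidAlgebra.mapDomain (FreeSemigroup.map G.genFwd)
  invFun := MonoidAlgebra.mapDomain (FreeSemigroup.map G.genBwd)
  left_inv a := by
    show MonoidAlgebra.ofCoeff (Finsupp.mapDomain (FreeSemigroup.map G.genBwd)
      (Finsupp.mapDomain (FreeSemigroup.map G.genFwd) a.coeff)) = a
    rw [← Finsupp.mapDomain_comp]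
    rw [show (⇑(FreeSemigroup.map G.genBwd) ∘ ⇑(FreeSemigroup.map G.genFwd)) = id from
      funext fun w => by
        induction w using FreeSemigroup.recOnMul with
        | ih1 x => simp [FreeSemigroup.map_of, genBwd_genFwd]
        | ih2 x y hx hy => simp only [Function.comp_apply, map_mul, id_eq] at *; rw [hx, hy]]
    exact congrArg MonoidAlgebra.ofCoeff Finsupp.mapDomain_id
  right_inv a := by
    show MonoidAlgebra.ofCoeff (Finsupp.mapDomain (FreeSemigroup.map G.genFwd)
      (Finsupp.mapDomain (FreeSemigroup.map G.genBwd) a.coeff)) = a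
    rw [← Finsupp.mapDomain_comp]
    rw [show (⇑(FreeSemigroup.map G.genFwd) ∘ ⇑(FreeSemigroup.map G.genBwd)) = id from
      funext fun w => by
        induction w using FreeSemigroup.recOnMul with
        | ih1 x => simp [FreeSemigroup.map_of, genFwd_genBwd]
        | ih2 x y hx hy => simp only [Function.comp_apply, map_mul, id_eq] at *; rw [hx, hy]]
    exact congrArg MonoidAlgebra.ofCoeff Finsupp.mapDomain_id
  map_mul' x y := MonoidAlgebra.mapDomain_mul (FreeSemigroup.map G.genFwd) x y
  map_add' x y := MonoidAlgebra.mapDomain_add _ x y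

@[simp] lemma Phi_of (x : Gen G) :
    G.Phi R (G.of R x) = DGraph.of G.assoc R (G.genFwd x) := by
  show MonoidAlgebra.mapDomain (FreeSemigroup.map G.genFwd) (MonoidAlgebra.single _ 1) = _
  rw [MonoidAlgebra.mapDomain_single]
  rfl

@[simp] lemma Phi_symm_of (x : DGraph.Gen G.assoc) :
    (G.Phi R).symm (DGraph.of G.assoc R x) = G.of R (G.genBwd x) := by
  show MonoidAlgebra.mapDomain (FreeSemigroup.map G.genBwd) (MonoidAlgebra.single _ 1) = _
  rw [MonoidAlgebra.mapDomain_single]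
  rfl

end WGraph
namespace DGraph

variable (F : DGraph) (R : Type) [Ring R]

lemma pi_rel {a b : F.FreeRng R} (h : F.Rel R a b) : F.π R a = F.π R b :=
  (RingCon.eq _).mpr (RingConGen.Rel.of _ _ h)

/-- The projection as an additive monoid hom. -/
noncomputable def πHom : F.FreeRng R →+ F.LPA R where
  toFun := F.π R
  map_zero' := rfl
  map_add' _ _ := rfl

lemma pi_mul (a b : F.FreeRng R) : F.π R (a * b) = F.π R a * F.π R b := rfl

noncomputable def pv (v : F.V) : F.LPA R := F.π R (F.of R (.vert v))
noncomputable def pe (e : F.Ed) : F.LPA R := F.π R (F.of R (.edge e))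
noncomputable def ps (e : F.Ed) : F.LPA R := F.π R (F.of R (.star e))

open Classical in
lemma pv_pv (u v : F.V) : F.pv R u * F.pv R v = if u = v then F.pv R u else 0 := by
  show F.π R (F.of R (.vert u) * F.of R (.vert v)) = _
  rw [F.pi_rel R (Rel.vv u v)]
  split_ifs <;> rfl

lemma pv_pe (e : F.Ed) : F.pv R (F.src e) * F.pe R e = F.pe R e := F.pi_rel R (Rel.src_edge e)
lemma pe_pv (e : F.Ed) : F.pe R e * F.pv R (F.rng e) = F.pe R e := F.pi_rel R (Rel.edge_rng e)
lemma pv_ps (e : F.Ed) : F.pv R (F.rng e) * F.ps R e = F.ps R e := F.pi_rel R (Rel.rng_star e)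
lemma ps_pv (e : F.Ed) : F.ps R e * F.pv R (F.src e) = F.ps R e := F.pi_rel R (Rel.star_src e)

open Classical in
lemma ck2 (e f : F.Ed) :
    F.ps R e * F.pe R f = if e = f then F.pv R (F.rng e) else 0 := by
  show F.π R (F.of R (.star e) * F.of R (.edge f)) = _
  rw [F.pi_rel R (Rel.CK2 e f)]
  split_ifs <;> rfl

lemma pv_pv_ne {u v : F.V} (h : u ≠ v) : F.pv R u * F.pv R v = 0 := by
  rw [pv_pv, if_neg h]

lemma pe_pv_ne {e : F.Ed} {w : F.V} (h : F.rng e ≠ w) : F.pe R e * F.pv R w = 0 := by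
  rw [← F.pe_pv R e, mul_assoc, F.pv_pv_ne R h, mul_zero]

lemma pv_pe_ne {e : F.Ed} {w : F.V} (h : w ≠ F.src e) : F.pv R w * F.pe R e = 0 := by
  rw [← F.pv_pe R e, ← mul_assoc, F.pv_pv_ne R h, zero_mul]

lemma ps_pv_ne {e : F.Ed} {w : F.V} (h : F.src e ≠ w) : F.ps R e * F.pv R w = 0 := by
  rw [← F.ps_pv R e, mul_assoc, F.pv_pv_ne R h, mul_zero]

lemma pv_ps_ne {e : F.Ed} {w : F.V} (h : w ≠ F.rng e) : F.pv R w * F.ps R e = 0 := by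
  rw [← F.pv_ps R e, ← mul_assoc, F.pv_pv_ne R h, zero_mul]

lemma pe_pe_ne {e f : F.Ed} (h : F.rng e ≠ F.src f) : F.pe R e * F.pe R f = 0 := by
  rw [← F.pv_pe R f, ← mul_assoc, F.pe_pv_ne R h, zero_mul]

lemma pe_ps_ne {e f : F.Ed} (h : F.rng e ≠ F.rng f) : F.pe R e * F.ps R f = 0 := by
  rw [← F.pv_ps R f, ← mul_assoc, F.pe_pv_ne R h, zero_mul]

lemma ps_ps_ne {e f : F.Ed} (h : F.src e ≠ F.rng f) : F.ps R e * F.ps R f = 0 := by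
  rw [← F.pv_ps R f, ← mul_assoc, F.ps_pv_ne R h, zero_mul]

end DGraph

namespace WGraph

variable (G : WGraph) (R : Type) [Ring R]

lemma pi_rel {a b : G.FreeRng R} (h : G.Rel R a b) : G.π R a = G.π R b :=
  (RingCon.eq _).mpr (RingConGen.Rel.of _ _ h)

/-- The projection as an additive monoid hom. -/
noncomputable def πHom : G.FreeRng R →+ G.LWPA R where
  toFun := G.π R
  map_zero' := rfl
  map_add' _ _ := rfl

noncomputable def qv (v : G.V) : G.LWPA R := G.π R (G.of R (.vert v))
noncomputable def qe (e : G.E) : G.LWPA R := G.π R (G.of R (.edge e))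
noncomputable def qs (e : G.E) : G.LWPA R := G.π R (G.of R (.star e))

open Classical in
lemma qv_qv (u v : G.V) : G.qv R u * G.qv R v = if u = v then G.qv R u else 0 := by
  show G.π R (G.of R (.vert u) * G.of R (.vert v)) = _
  rw [G.pi_rel R (Rel.vv u v)]
  split_ifs <;> rfl

lemma qv_qe (e : G.E) : G.qv R (G.src e.1) * G.qe R e = G.qe R e := G.pi_rel R (Rel.src_edge e)
lemma qe_qv (e : G.E) : G.qe R e * G.qv R (G.rng e.1) = G.qe R e := G.pi_rel R (Rel.edge_rng e)
lemma qv_qs (e : G.E) : G.qv R (G.rng e.1) * G.qs R e = G.qs R e := G.pi_rel R (Rel.rng_star e)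
lemma qs_qv (e : G.E) : G.qs R e * G.qv R (G.src e.1) = G.qs R e := G.pi_rel R (Rel.star_src e)

lemma qv_qv_ne {u v : G.V} (h : u ≠ v) : G.qv R u * G.qv R v = 0 := by
  rw [qv_qv, if_neg h]

lemma qe_qv_ne {e : G.E} {w : G.V} (h : G.rng e.1 ≠ w) : G.qe R e * G.qv R w = 0 := by
  rw [← G.qe_qv R e, mul_assoc, G.qv_qv_ne R h, mul_zero]

lemma qv_qe_ne {e : G.E} {w : G.V} (h : w ≠ G.src e.1) : G.qv R w * G.qe R e = 0 := by
  rw [← G.qv_qe R e, ← mul_assoc, G.qv_qv_ne R h, zero_mul]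

lemma qs_qv_ne {e : G.E} {w : G.V} (h : G.src e.1 ≠ w) : G.qs R e * G.qv R w = 0 := by
  rw [← G.qs_qv R e, mul_assoc, G.qv_qv_ne R h, mul_zero]

lemma qv_qs_ne {e : G.E} {w : G.V} (h : w ≠ G.rng e.1) : G.qv R w * G.qs R e = 0 := by
  rw [← G.qv_qs R e, ← mul_assoc, G.qv_qv_ne R h, zero_mul]

lemma qe_qe_ne {e f : G.E} (h : G.rng e.1 ≠ G.src f.1) : G.qe R e * G.qe R f = 0 := by
  rw [← G.qv_qe R f, ← mul_assoc, G.qe_qv_ne R h, zero_mul]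

lemma qe_qs_ne {e f : G.E} (h : G.rng e.1 ≠ G.rng f.1) : G.qe R e * G.qs R f = 0 := by
  rw [← G.qv_qs R f, ← mul_assoc, G.qe_qv_ne R h, zero_mul]

lemma qs_qs_ne {e f : G.E} (h : G.src e.1 ≠ G.rng f.1) : G.qs R e * G.qs R f = 0 := by
  rw [← G.qv_qs R f, ← mul_assoc, G.qs_qv_ne R h, zero_mul]

end WGraph
namespace WGraph

variable (G : WGraph)

lemma wforest_rng {γ : G.St} (h : G.src γ ∈ G.WForest) : G.rng γ ∈ G.WForest := by
  obtain ⟨v, hv, hr⟩ := h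
  exact ⟨v, hv, hr.tail ⟨γ, rfl, rfl⟩⟩

lemma wt_eq_one {α : G.St} (h : G.src α ∉ G.WForest) : G.wt α = 1 := by
  by_contra hw
  have h2 : 2 ≤ G.wt α := by have := G.wt_pos α; omega
  exact h ⟨G.src α, ⟨α, rfl, h2⟩, Relation.ReflTransGen.refl⟩

lemma assoc_src_of_notin {e : G.E} (h : G.src e.1 ∉ G.WForest) :
    G.assoc.src e = G.src e.1 := if_neg h

lemma assoc_src_of_mem {e : G.E} (h : G.src e.1 ∈ G.WForest) :
    G.assoc.src e = G.rng e.1 := if_pos h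

lemma assoc_rng_of_notin {e : G.E} (h : G.src e.1 ∉ G.WForest) :
    G.assoc.rng e = G.rng e.1 := if_neg h

lemma assoc_rng_of_mem {e : G.E} (h : G.src e.1 ∈ G.WForest) :
    G.assoc.rng e = G.src e.1 := if_pos h

/-- Characterization of the edges of `F` emitted by a vertex outside the weight forest. -/
lemma assoc_src_eq_iff_notin {e : G.E} {v : G.V} (hv : v ∉ G.WForest) :
    G.assoc.src e = v ↔ G.src e.1 = v := by
  by_cases h : G.src e.1 ∈ G.WForest
  · rw [G.assoc_src_of_mem h]
    constructor
    · rintro rfl; exact absurd (G.wforest_rng h) hv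
    · rintro rfl; exact absurd h hv
  · rw [G.assoc_src_of_notin h]; exact Iff.rfl

/-- Characterization of the edges of `F` emitted by a vertex of the weight forest. -/
lemma assoc_src_eq_iff_mem {e : G.E} {v : G.V} (hv : v ∈ G.WForest) :
    G.assoc.src e = v ↔ (G.src e.1 ∈ G.WForest ∧ G.rng e.1 = v) := by
  by_cases h : G.src e.1 ∈ G.WForest
  · rw [G.assoc_src_of_mem h]; simp [h]; exact Iff.rfl
  · rw [G.assoc_src_of_notin h]
    constructor
    · rintro rfl; exact absurd hv h
    · rintro ⟨h', _⟩; exact absurd h' h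

/-- Two distinct structured edges with sources in the weight forest have distinct sources
and distinct ranges. -/
lemma src_ne_of_wf (hred : G.Reducible) {α β : G.St} (hαβ : α ≠ β)
    (hα : G.src α ∈ G.WForest) (hβ : G.src β ∈ G.WForest) :
    G.src α ≠ G.src β ∧ G.rng α ≠ G.rng β := by
  constructor
  · intro h
    exact hαβ ((hred.2 _ hα).1 α β rfl h.symm)
  · intro h
    exact hαβ ((hred.2 _ (G.wforest_rng hα)).2 α β rfl h.symm hα hβ)

end WGraph
namespace WGraph

variable (G : WGraph)

/-- Index bijection at a vertex outside the weight forest. -/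
def embN {v : G.V} (hv : v ∉ G.WForest) (α : {α : G.St // G.src α = v}) :
    {e : G.E // G.assoc.src e = v} :=
  ⟨⟨α.1, ⟨0, G.wt_pos α.1⟩⟩, (G.assoc_src_eq_iff_notin hv).mpr α.2⟩

lemma embN_bij {v : G.V} (hv : v ∉ G.WForest) : Function.Bijective (G.embN hv) := by
  constructor
  · intro x y hxy
    exact Subtype.ext (congrArg (fun z => z.1.1) hxy)
  · rintro ⟨⟨a, k⟩, hk⟩
    have ha : G.src a = v := (G.assoc_src_eq_iff_notin hv).mp hk
    have h1 : G.wt a = 1 := G.wt_eq_one (by rw [ha]; exact hv)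
    refine ⟨⟨a, ha⟩, Subtype.ext ?_⟩
    show (⟨a, ⟨0, G.wt_pos a⟩⟩ : G.E) = ⟨a, k⟩
    have hk0 : k = ⟨0, G.wt_pos a⟩ := by
      have := k.2
      apply Fin.ext
      omega
    rw [hk0]

/-- Index bijection at a vertex of the weight forest. -/
def embM {α₀ : G.St} {v : G.V} (hsm : G.src α₀ ∈ G.WForest) (hr : G.rng α₀ = v)
    (k : Fin (G.wt α₀)) : {e : G.E // G.assoc.src e = v} :=
  ⟨⟨α₀, k⟩, (G.assoc_src_of_mem (e := ⟨α₀, k⟩) hsm).trans hr⟩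

lemma embM_bij (hred : G.Reducible) {α₀ : G.St} {v : G.V} (hsm : G.src α₀ ∈ G.WForest)
    (hr : G.rng α₀ = v) : Function.Bijective (G.embM hsm hr) := by
  have hv : v ∈ G.WForest := hr ▸ G.wforest_rng hsm
  constructor
  · intro x y hxy
    have := congrArg (fun z => (z.1.2 : ℕ)) hxy
    exact Fin.ext this
  · rintro ⟨⟨a, k⟩, hk⟩
    obtain ⟨hsm', hr'⟩ := (G.assoc_src_eq_iff_mem hv).mp hk
    have ha : a = α₀ := (hred.2 v hv).2 a α₀ hr' hr hsm' hsm
    subst ha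
    exact ⟨k, rfl⟩

lemma mkE_eq_iff {α : G.St} {i j : Fin (G.wt α)} : (⟨α, i⟩ : G.E) = ⟨α, j⟩ ↔ i = j := by
  constructor
  · intro h
    exact Fin.ext (congrArg (fun z : G.E => (z.2 : ℕ)) h)
  · rintro rfl; rfl

end WGraph
namespace WGraph

variable (G : WGraph) (R : Type) [Ring R]

lemma rel_fwd (hred : G.Reducible) (a b : G.FreeRng R) (h : G.Rel R a b) :
    ringConGen (DGraph.Rel G.assoc R) (G.Phi R a) (G.Phi R b) := by
  have key : ∀ {x y : DGraph.FreeRng R G.assoc}, DGraph.Rel G.assoc R x y →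
      ringConGen (DGraph.Rel G.assoc R) x y := fun h => RingConGen.Rel.of _ _ h
  have quot : ∀ {x y : DGraph.FreeRng R G.assoc}, G.assoc.π R x = G.assoc.π R y →
      ringConGen (DGraph.Rel G.assoc R) x y := fun h => (RingCon.eq _).mp h
  cases h with
  | vv u v =>
      simp only [map_mul, apply_ite (G.Phi R), map_zero, Phi_of, genFwd_vert]
      exact key (DGraph.Rel.vv (F := G.assoc) (R := R) u v)
  | src_edge e =>
      simp only [map_mul, Phi_of, genFwd_vert]
      by_cases hm : G.src e.1 ∈ G.WForest
      · have h1 : G.genFwd (.edge e) = .star e := G.genFwd_edge_mem hm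
        rw [h1]
        have := key (DGraph.Rel.rng_star (F := G.assoc) (R := R) e)
        rwa [G.assoc_rng_of_mem hm] at this
      · have h1 : G.genFwd (.edge e) = .edge e := G.genFwd_edge_notin hm
        rw [h1]
        have := key (DGraph.Rel.src_edge (F := G.assoc) (R := R) e)
        rwa [G.assoc_src_of_notin hm] at this
  | edge_rng e =>
      simp only [map_mul, Phi_of, genFwd_vert]
      by_cases hm : G.src e.1 ∈ G.WForest
      · have h1 : G.genFwd (.edge e) = .star e := G.genFwd_edge_mem hm
        rw [h1]
        have := key (DGraph.Rel.star_src (F := G.assoc) (R := R) e)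
        rwa [G.assoc_src_of_mem hm] at this
      · have h1 : G.genFwd (.edge e) = .edge e := G.genFwd_edge_notin hm
        rw [h1]
        have := key (DGraph.Rel.edge_rng (F := G.assoc) (R := R) e)
        rwa [G.assoc_rng_of_notin hm] at this
  | rng_star e =>
      simp only [map_mul, Phi_of, genFwd_vert]
      by_cases hm : G.src e.1 ∈ G.WForest
      · have h1 : G.genFwd (.star e) = .edge e := G.genFwd_star_mem hm
        rw [h1]
        have := key (DGraph.Rel.src_edge (F := G.assoc) (R := R) e)
        rwa [G.assoc_src_of_mem hm] at this
      · have h1 : G.genFwd (.star e) = .star e := G.genFwd_star_notin hm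
        rw [h1]
        have := key (DGraph.Rel.rng_star (F := G.assoc) (R := R) e)
        rwa [G.assoc_rng_of_notin hm] at this
  | star_src e =>
      simp only [map_mul, Phi_of, genFwd_vert]
      by_cases hm : G.src e.1 ∈ G.WForest
      · have h1 : G.genFwd (.star e) = .edge e := G.genFwd_star_mem hm
        rw [h1]
        have := key (DGraph.Rel.edge_rng (F := G.assoc) (R := R) e)
        rwa [G.assoc_rng_of_mem hm] at this
      · have h1 : G.genFwd (.star e) = .star e := G.genFwd_star_notin hm
        rw [h1]
        have := key (DGraph.Rel.star_src (F := G.assoc) (R := R) e)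
        rwa [G.assoc_src_of_notin hm] at this
  | CK1 v i j hi hj =>
      obtain ⟨α₀, hα₀, hiw⟩ := hi
      obtain ⟨β₀, hβ₀, hjw⟩ := hj
      by_cases hv : v ∈ G.WForest
      · have uniq := (hred.2 v hv).1
        have hβα : β₀ = α₀ := uniq _ _ hβ₀ hα₀
        subst hβα
        have hm : G.src β₀ ∈ G.WForest := by rw [hβ₀]; exact hβ₀ ▸ hv
        letI : Unique {α : G.St // G.src α = v} :=
          ⟨⟨⟨β₀, hβ₀⟩⟩, fun b => Subtype.ext (uniq _ _ b.2 hβ₀)⟩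
        rw [finsum_unique]
        rw [show ((default : {α : G.St // G.src α = v}) : G.St) = β₀ from rfl]
        rw [edgeT, dif_pos hiw, starT, dif_pos hjw, map_mul, Phi_of, Phi_of,
          apply_ite (G.Phi R), map_zero, Phi_of]
        have h1 : G.genFwd (.edge ⟨β₀, ⟨i, hiw⟩⟩) = .star ⟨β₀, ⟨i, hiw⟩⟩ := G.genFwd_edge_mem hm
        have h2 : G.genFwd (.star ⟨β₀, ⟨j, hjw⟩⟩) = .edge ⟨β₀, ⟨j, hjw⟩⟩ := G.genFwd_star_mem hm
        rw [h1, h2]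
        apply quot
        show G.assoc.ps R ⟨β₀, ⟨i, hiw⟩⟩ * G.assoc.pe R ⟨β₀, ⟨j, hjw⟩⟩ = _
        rw [G.assoc.ck2 R ⟨β₀, ⟨i, hiw⟩⟩ ⟨β₀, ⟨j, hjw⟩⟩, apply_ite (G.assoc.π R)]
        by_cases hij : i = j
        · subst hij
          erw [if_pos rfl, if_pos rfl, G.assoc_rng_of_mem hm]
          show G.assoc.pv R (G.src β₀) = _
          rw [hβ₀]
          rfl
        · erw [if_neg (fun (hEq : (⟨β₀, ⟨i, hiw⟩⟩ : G.E) = ⟨β₀, ⟨j, hjw⟩⟩) => hij (congrArg (fun z : G.E => (z.2 : ℕ)) hEq)), if_neg hij]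
          rfl
      · have hwt : ∀ γ : G.St, G.src γ = v → G.wt γ = 1 :=
          fun γ hγ => G.wt_eq_one (by rw [hγ]; exact hv)
        have hi0 : i = 0 := by have := hwt α₀ hα₀; omega
        have hj0 : j = 0 := by have := hwt β₀ hβ₀; omega
        subst hi0; subst hj0
        have hmap : G.Phi R (∑ᶠ α : {α : G.St // G.src α = v}, G.edgeT R α.1 0 * G.starT R α.1 0)
            = ∑ᶠ α : {α : G.St // G.src α = v},
                (DGraph.of G.assoc R (.edge ⟨α.1, ⟨0, G.wt_pos α.1⟩⟩) *
                 DGraph.of G.assoc R (.star ⟨α.1, ⟨0, G.wt_pos α.1⟩⟩)) := by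
          rw [show (⇑(G.Phi R)) (∑ᶠ α : {α : G.St // G.src α = v}, G.edgeT R α.1 0 * G.starT R α.1 0)
              = ∑ᶠ α : {α : G.St // G.src α = v}, G.Phi R (G.edgeT R α.1 0 * G.starT R α.1 0) from
            (G.Phi R).toAddEquiv.map_finsum _]
          apply finsum_congr
          intro α
          have hm : G.src α.1 ∉ G.WForest := by rw [α.2]; exact hv
          rw [edgeT, dif_pos (G.wt_pos α.1), starT, dif_pos (G.wt_pos α.1), map_mul, Phi_of, Phi_of]
          have h1 := G.genFwd_edge_notin (e := ⟨α.1, ⟨0, G.wt_pos α.1⟩⟩) hm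
          have h2 := G.genFwd_star_notin (e := ⟨α.1, ⟨0, G.wt_pos α.1⟩⟩) hm
          rw [h1, h2]
        have hre : (∑ᶠ α : {α : G.St // G.src α = v},
              (DGraph.of G.assoc R (.edge ⟨α.1, ⟨0, G.wt_pos α.1⟩⟩) *
               DGraph.of G.assoc R (.star ⟨α.1, ⟨0, G.wt_pos α.1⟩⟩)))
            = ∑ᶠ e : {e : G.E // G.assoc.src e = v},
              (DGraph.of G.assoc R (.edge e.1) * DGraph.of G.assoc R (.star e.1)) :=
          finsum_eq_of_bijective (G.embN hv) (G.embN_bij hv) (fun x => rfl)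
        rw [hmap, hre, if_pos rfl, Phi_of, genFwd_vert]
        exact key (DGraph.Rel.CK1 (F := G.assoc) (R := R) v
          ⟨(⟨α₀, ⟨0, G.wt_pos α₀⟩⟩ : G.E), (G.assoc_src_eq_iff_notin hv).mpr hα₀⟩)
  | CK2 α β =>
      by_cases hab : α = β
      · subst hab
        rw [if_pos rfl, Phi_of, genFwd_vert]
        by_cases hm : G.src α ∈ G.WForest
        · have hmap : G.Phi R (∑ i ∈ Finset.range (max (G.wt α) (G.wt α)),
                G.starT R α i * G.edgeT R α i)
              = ∑ᶠ e : {e : G.E // G.assoc.src e = G.rng α},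
                  (DGraph.of G.assoc R (.edge e.1) * DGraph.of G.assoc R (.star e.1)) := by
            rw [max_self, map_sum]
            have h1 : ∑ᶠ e : {e : G.E // G.assoc.src e = G.rng α},
                  (DGraph.of G.assoc R (.edge e.1) * DGraph.of G.assoc R (.star e.1))
                = ∑ᶠ k : Fin (G.wt α),
                    (DGraph.of G.assoc R (.edge ⟨α, k⟩) * DGraph.of G.assoc R (.star ⟨α, k⟩)) :=
              (finsum_eq_of_bijective (G.embM hm rfl) (G.embM_bij hred hm rfl)
                (fun x => rfl)).symm
            rw [h1, finsum_eq_sum_of_fintype, ← Fin.sum_univ_eq_sum_range]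
            apply Finset.sum_congr rfl
            intro k _
            erw [starT, dif_pos k.2, edgeT, dif_pos k.2, map_mul, Phi_of, Phi_of,
              G.genFwd_star_mem hm, G.genFwd_edge_mem hm]
          rw [hmap]
          exact key (DGraph.Rel.CK1 (F := G.assoc) (R := R) (G.rng α)
            ⟨(⟨α, ⟨0, G.wt_pos α⟩⟩ : G.E), G.assoc_src_of_mem hm⟩)
        · have h1 : G.wt α = 1 := G.wt_eq_one hm
          have hr : Finset.range (max (G.wt α) (G.wt α)) = {0} := by
            rw [max_self, h1, Finset.range_one]
          erw [hr, Finset.sum_singleton, starT, dif_pos (G.wt_pos α), edgeT,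
            dif_pos (G.wt_pos α), map_mul, Phi_of, Phi_of, G.genFwd_star_notin hm,
            G.genFwd_edge_notin hm]
          have := key (DGraph.Rel.CK2 (F := G.assoc) (R := R)
            ⟨α, ⟨0, G.wt_pos α⟩⟩ ⟨α, ⟨0, G.wt_pos α⟩⟩)
          erw [if_pos rfl, G.assoc_rng_of_notin hm] at this; exact this
      · rw [if_neg hab, map_zero]
        apply quot
        rw [map_sum]
        have hπ : G.assoc.π R (∑ i ∈ Finset.range (max (G.wt α) (G.wt β)),
              G.Phi R (G.starT R α i * G.edgeT R β i))
            = ∑ i ∈ Finset.range (max (G.wt α) (G.wt β)),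
                G.assoc.π R (G.Phi R (G.starT R α i * G.edgeT R β i)) :=
          map_sum (G.assoc.πHom R) _ _
        rw [hπ, show G.assoc.π R (0 : DGraph.FreeRng R G.assoc) = 0 from rfl]
        apply Finset.sum_eq_zero
        intro i _
        by_cases hiα : i < G.wt α
        swap
        · rw [starT, dif_neg hiα, zero_mul, map_zero]; rfl
        by_cases hiβ : i < G.wt β
        swap
        · rw [edgeT, dif_neg hiβ, mul_zero, map_zero]; rfl
        rw [starT, dif_pos hiα, edgeT, dif_pos hiβ, map_mul]
        by_cases hmα : G.src α ∈ G.WForest <;> by_cases hmβ : G.src β ∈ G.WForest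
        · erw [Phi_of, Phi_of, G.genFwd_star_mem hmα, G.genFwd_edge_mem hmβ]
          show G.assoc.pe R ⟨α, ⟨i, hiα⟩⟩ * G.assoc.ps R ⟨β, ⟨i, hiβ⟩⟩ = 0
          apply G.assoc.pe_ps_ne R
          erw [G.assoc_rng_of_mem hmα, G.assoc_rng_of_mem hmβ]
          exact (G.src_ne_of_wf hred hab hmα hmβ).1
        · erw [Phi_of, Phi_of, G.genFwd_star_mem hmα, G.genFwd_edge_notin hmβ]
          show G.assoc.pe R ⟨α, ⟨i, hiα⟩⟩ * G.assoc.pe R ⟨β, ⟨i, hiβ⟩⟩ = 0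
          apply G.assoc.pe_pe_ne R
          erw [G.assoc_rng_of_mem hmα, G.assoc_src_of_notin hmβ]
          intro hEq
          have hEq' : G.src α = G.src β := hEq
          exact hmβ (by rw [← hEq']; exact hmα)
        · erw [Phi_of, Phi_of, G.genFwd_star_notin hmα, G.genFwd_edge_mem hmβ]
          show G.assoc.ps R ⟨α, ⟨i, hiα⟩⟩ * G.assoc.ps R ⟨β, ⟨i, hiβ⟩⟩ = 0
          apply G.assoc.ps_ps_ne R
          erw [G.assoc_src_of_notin hmα, G.assoc_rng_of_mem hmβ]
          intro hEq
          have hEq' : G.src α = G.src β := hEq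
          exact hmα (by rw [hEq']; exact hmβ)
        · erw [Phi_of, Phi_of, G.genFwd_star_notin hmα, G.genFwd_edge_notin hmβ]
          show G.assoc.ps R ⟨α, ⟨i, hiα⟩⟩ * G.assoc.pe R ⟨β, ⟨i, hiβ⟩⟩ = 0
          erw [G.assoc.ck2 R, if_neg (fun (hEq : (⟨α, ⟨i, hiα⟩⟩ : G.E) = ⟨β, ⟨i, hiβ⟩⟩) => hab (congrArg Sigma.fst hEq))]

end WGraph
namespace WGraph

variable (G : WGraph) (R : Type) [Ring R]

lemma rel_bwd (hred : G.Reducible) (a b : DGraph.FreeRng R G.assoc)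
    (h : DGraph.Rel G.assoc R a b) :
    ringConGen (G.Rel R) ((G.Phi R).symm a) ((G.Phi R).symm b) := by
  have key : ∀ {x y : G.FreeRng R}, G.Rel R x y → ringConGen (G.Rel R) x y :=
    fun h => RingConGen.Rel.of _ _ h
  have quot : ∀ {x y : G.FreeRng R}, G.π R x = G.π R y → ringConGen (G.Rel R) x y :=
    fun h => (RingCon.eq _).mp h
  have trans_eq : ∀ {x x' y y' : G.FreeRng R}, x = x' → y = y' →
      ringConGen (G.Rel R) x' y' → ringConGen (G.Rel R) x y := by
    rintro x x' y y' rfl rfl h; exact h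
  cases h with
  | vv u v =>
      simp only [map_mul, apply_ite ((G.Phi R).symm), map_zero, Phi_symm_of, genBwd_vert]
      exact key (WGraph.Rel.vv (G := G) (R := R) u v)
  | src_edge e =>
      by_cases hm : G.src e.1 ∈ G.WForest
      · rw [G.assoc_src_of_mem hm]
        simp only [map_mul, Phi_symm_of, genBwd_vert, G.genBwd_edge_mem hm]
        exact key (WGraph.Rel.rng_star (G := G) (R := R) e)
      · rw [G.assoc_src_of_notin hm]
        simp only [map_mul, Phi_symm_of, genBwd_vert, G.genBwd_edge_notin hm]
        exact key (WGraph.Rel.src_edge (G := G) (R := R) e)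
  | edge_rng e =>
      by_cases hm : G.src e.1 ∈ G.WForest
      · rw [G.assoc_rng_of_mem hm]
        simp only [map_mul, Phi_symm_of, genBwd_vert, G.genBwd_edge_mem hm]
        exact key (WGraph.Rel.star_src (G := G) (R := R) e)
      · rw [G.assoc_rng_of_notin hm]
        simp only [map_mul, Phi_symm_of, genBwd_vert, G.genBwd_edge_notin hm]
        exact key (WGraph.Rel.edge_rng (G := G) (R := R) e)
  | rng_star e =>
      by_cases hm : G.src e.1 ∈ G.WForest
      · rw [G.assoc_rng_of_mem hm]
        simp only [map_mul, Phi_symm_of, genBwd_vert, G.genBwd_star_mem hm]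
        exact key (WGraph.Rel.src_edge (G := G) (R := R) e)
      · rw [G.assoc_rng_of_notin hm]
        simp only [map_mul, Phi_symm_of, genBwd_vert, G.genBwd_star_notin hm]
        exact key (WGraph.Rel.rng_star (G := G) (R := R) e)
  | star_src e =>
      by_cases hm : G.src e.1 ∈ G.WForest
      · rw [G.assoc_src_of_mem hm]
        simp only [map_mul, Phi_symm_of, genBwd_vert, G.genBwd_star_mem hm]
        exact key (WGraph.Rel.edge_rng (G := G) (R := R) e)
      · rw [G.assoc_src_of_notin hm]
        simp only [map_mul, Phi_symm_of, genBwd_vert, G.genBwd_star_notin hm]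
        exact key (WGraph.Rel.star_src (G := G) (R := R) e)
  | CK1 v hv =>
      obtain ⟨e₀, he₀⟩ := hv
      by_cases hm : v ∈ G.WForest
      · obtain ⟨hsm, hr⟩ := (G.assoc_src_eq_iff_mem hm).mp he₀
        have hmap : (G.Phi R).symm (∑ᶠ e : {e : G.E // G.assoc.src e = v},
              (DGraph.of G.assoc R (.edge e.1) * DGraph.of G.assoc R (.star e.1)))
            = ∑ i ∈ Finset.range (max (G.wt e₀.1) (G.wt e₀.1)),
                G.starT R e₀.1 i * G.edgeT R e₀.1 i := by
          rw [show ((G.Phi R).symm) (∑ᶠ e : {e : G.E // G.assoc.src e = v},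
                (DGraph.of G.assoc R (.edge e.1) * DGraph.of G.assoc R (.star e.1)))
              = ∑ᶠ e : {e : G.E // G.assoc.src e = v},
                  (G.Phi R).symm (DGraph.of G.assoc R (.edge e.1) *
                    DGraph.of G.assoc R (.star e.1)) from
            (G.Phi R).symm.toAddEquiv.map_finsum _]
          rw [finsum_congr (fun e : {e : G.E // G.assoc.src e = v} => by
            obtain ⟨hsm', _⟩ := (G.assoc_src_eq_iff_mem hm).mp e.2
            simp only [map_mul, Phi_symm_of, G.genBwd_edge_mem hsm',
              G.genBwd_star_mem hsm'] :
            ∀ e : {e : G.E // G.assoc.src e = v},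
              (G.Phi R).symm (DGraph.of G.assoc R (.edge e.1) *
                DGraph.of G.assoc R (.star e.1))
              = G.of R (.star e.1) * G.of R (.edge e.1))]
          rw [show (∑ᶠ e : {e : G.E // G.assoc.src e = v},
                G.of R (.star e.1) * G.of R (.edge e.1))
              = ∑ᶠ k : Fin (G.wt e₀.1),
                  G.of R (.star ⟨e₀.1, k⟩) * G.of R (.edge ⟨e₀.1, k⟩) from
            (finsum_eq_of_bijective (G.embM hsm hr) (G.embM_bij hred hsm hr)
              (fun k => rfl)).symm]
          rw [finsum_congr (fun k : Fin (G.wt e₀.1) => by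
            rw [starT, dif_pos k.2, edgeT, dif_pos k.2] :
            ∀ k : Fin (G.wt e₀.1),
              G.of R (.star ⟨e₀.1, k⟩) * G.of R (.edge ⟨e₀.1, k⟩)
              = G.starT R e₀.1 k.1 * G.edgeT R e₀.1 k.1)]
          rw [finsum_eq_sum_of_fintype,
            Fin.sum_univ_eq_sum_range (fun i => G.starT R e₀.1 i * G.edgeT R e₀.1 i)
              (G.wt e₀.1), max_self]
        have hrhs : (G.Phi R).symm (DGraph.of G.assoc R (.vert v)) = G.of R (.vert v) := by
          erw [Phi_symm_of, genBwd_vert]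
        have hck := key (WGraph.Rel.CK2 (G := G) (R := R) e₀.1 e₀.1)
        rw [if_pos rfl, hr] at hck
        exact trans_eq hmap hrhs hck
      · have hsrc : G.src e₀.1 = v := (G.assoc_src_eq_iff_notin hm).mp he₀
        have hmap : (G.Phi R).symm (∑ᶠ e : {e : G.E // G.assoc.src e = v},
              (DGraph.of G.assoc R (.edge e.1) * DGraph.of G.assoc R (.star e.1)))
            = ∑ᶠ α : {α : G.St // G.src α = v}, G.edgeT R α.1 0 * G.starT R α.1 0 := by
          rw [show ((G.Phi R).symm) (∑ᶠ e : {e : G.E // G.assoc.src e = v},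
                (DGraph.of G.assoc R (.edge e.1) * DGraph.of G.assoc R (.star e.1)))
              = ∑ᶠ e : {e : G.E // G.assoc.src e = v},
                  (G.Phi R).symm (DGraph.of G.assoc R (.edge e.1) *
                    DGraph.of G.assoc R (.star e.1)) from
            (G.Phi R).symm.toAddEquiv.map_finsum _]
          rw [finsum_congr (fun e : {e : G.E // G.assoc.src e = v} => by
            have hsm' : G.src e.1.1 ∉ G.WForest := by
              rw [(G.assoc_src_eq_iff_notin hm).mp e.2]; exact hm
            simp only [map_mul, Phi_symm_of, G.genBwd_edge_notin hsm',
              G.genBwd_star_notin hsm'] :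
            ∀ e : {e : G.E // G.assoc.src e = v},
              (G.Phi R).symm (DGraph.of G.assoc R (.edge e.1) *
                DGraph.of G.assoc R (.star e.1))
              = G.of R (.edge e.1) * G.of R (.star e.1))]
          rw [show (∑ᶠ e : {e : G.E // G.assoc.src e = v},
                G.of R (.edge e.1) * G.of R (.star e.1))
              = ∑ᶠ α : {α : G.St // G.src α = v},
                  G.of R (.edge ⟨α.1, ⟨0, G.wt_pos α.1⟩⟩) *
                    G.of R (.star ⟨α.1, ⟨0, G.wt_pos α.1⟩⟩) from
            (finsum_eq_of_bijective (G.embN hm) (G.embN_bij hm) (fun α => rfl)).symm]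
          exact finsum_congr (fun α : {α : G.St // G.src α = v} => by
            rw [edgeT, dif_pos (G.wt_pos α.1), starT, dif_pos (G.wt_pos α.1)])
        have hrhs : (G.Phi R).symm (DGraph.of G.assoc R (.vert v)) = G.of R (.vert v) := by
          erw [Phi_symm_of, genBwd_vert]
        have hck := key (WGraph.Rel.CK1 (G := G) (R := R) v 0 0
          ⟨e₀.1, hsrc, G.wt_pos _⟩ ⟨e₀.1, hsrc, G.wt_pos _⟩)
        rw [if_pos rfl] at hck
        exact trans_eq hmap hrhs hck
  | CK2 e f =>
      obtain ⟨α, i⟩ := e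
      obtain ⟨β, j⟩ := f
      by_cases hmα : G.src α ∈ G.WForest <;> by_cases hmβ : G.src β ∈ G.WForest
      · by_cases hss : G.src α = G.src β
        · have hab : α = β := (hred.2 (G.src α) hmα).1 α β rfl hss.symm
          subst hab
          apply quot
          have relck1 := G.pi_rel R (WGraph.Rel.CK1 (G := G) (R := R) (G.src α) i.1 j.1
            ⟨α, rfl, i.2⟩ ⟨α, rfl, j.2⟩)
          letI : Unique {γ : G.St // G.src γ = G.src α} :=
            ⟨⟨⟨α, rfl⟩⟩, fun b => Subtype.ext ((hred.2 _ hmα).1 _ _ b.2 rfl)⟩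
          rw [finsum_unique,
            show ((default : {γ : G.St // G.src γ = G.src α}) : G.St) = α from rfl] at relck1
          have he : G.edgeT R α i.1 = G.of R (.edge ⟨α, i⟩) := by rw [edgeT, dif_pos i.2]
          have hs : G.starT R α j.1 = G.of R (.star ⟨α, j⟩) := by rw [starT, dif_pos j.2]
          rw [he, hs] at relck1
          erw [map_mul, Phi_symm_of, Phi_symm_of, G.genBwd_star_mem hmα, G.genBwd_edge_mem hmα,
            apply_ite ((G.Phi R).symm), map_zero, Phi_symm_of, genBwd_vert,
            G.assoc_rng_of_mem hmα]
          rw [relck1, apply_ite (G.π R)]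
          by_cases hij : i = j
          · subst hij
            erw [if_pos rfl, if_pos rfl]
          · erw [if_neg (fun h => hij (Fin.ext h)), if_neg (fun h => hij (G.mkE_eq_iff.mp h))]
        · have hab : α ≠ β := fun h => hss (by rw [h])
          have hef : (⟨α, i⟩ : G.E) ≠ ⟨β, j⟩ := fun h => hab (congrArg Sigma.fst h)
          erw [if_neg hef, map_zero, map_mul, Phi_symm_of, Phi_symm_of,
            G.genBwd_star_mem hmα, G.genBwd_edge_mem hmβ]
          apply quot
          show G.qe R ⟨α, i⟩ * G.qs R ⟨β, j⟩ = G.π R 0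
          rw [show G.π R (0 : G.FreeRng R) = 0 from rfl]
          exact G.qe_qs_ne R ((G.src_ne_of_wf hred hab hmα hmβ).2)
      · have hab : α ≠ β := fun h => hmβ (by rw [← h]; exact hmα)
        have hef : (⟨α, i⟩ : G.E) ≠ ⟨β, j⟩ := fun h => hab (congrArg Sigma.fst h)
        erw [if_neg hef, map_zero, map_mul, Phi_symm_of, Phi_symm_of,
          G.genBwd_star_mem hmα, G.genBwd_edge_notin hmβ]
        apply quot
        show G.qe R ⟨α, i⟩ * G.qe R ⟨β, j⟩ = G.π R 0
        rw [show G.π R (0 : G.FreeRng R) = 0 from rfl]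
        exact G.qe_qe_ne R (fun h => hmβ (by rw [← h]; exact G.wforest_rng hmα))
      · have hab : α ≠ β := fun h => hmα (by rw [h]; exact hmβ)
        have hef : (⟨α, i⟩ : G.E) ≠ ⟨β, j⟩ := fun h => hab (congrArg Sigma.fst h)
        erw [if_neg hef, map_zero, map_mul, Phi_symm_of, Phi_symm_of,
          G.genBwd_star_notin hmα, G.genBwd_edge_mem hmβ]
        apply quot
        show G.qs R ⟨α, i⟩ * G.qs R ⟨β, j⟩ = G.π R 0
        rw [show G.π R (0 : G.FreeRng R) = 0 from rfl]
        exact G.qs_qs_ne R (fun h => hmα (by rw [h]; exact G.wforest_rng hmβ))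
      · have h1α : G.wt α = 1 := G.wt_eq_one hmα
        have h1β : G.wt β = 1 := G.wt_eq_one hmβ
        by_cases hab : α = β
        · subst hab
          have hij : i = j := Fin.ext (by have := i.2; have := j.2; omega)
          subst hij
          erw [if_pos rfl, map_mul, Phi_symm_of, Phi_symm_of, G.genBwd_star_notin hmα,
            G.genBwd_edge_notin hmα, Phi_symm_of, genBwd_vert, G.assoc_rng_of_notin hmα]
          have hi0 : i = ⟨0, G.wt_pos α⟩ := Fin.ext (by have := i.2; omega)
          rw [hi0]
          have hck := key (WGraph.Rel.CK2 (G := G) (R := R) α α)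
          rw [if_pos rfl] at hck
          have hr : Finset.range (max (G.wt α) (G.wt α)) = {0} := by
            rw [max_self, h1α, Finset.range_one]
          rw [hr, Finset.sum_singleton, starT, dif_pos (G.wt_pos α), edgeT,
            dif_pos (G.wt_pos α)] at hck
          exact hck
        · have hef : (⟨α, i⟩ : G.E) ≠ ⟨β, j⟩ := fun h => hab (congrArg Sigma.fst h)
          erw [if_neg hef, map_zero, map_mul, Phi_symm_of, Phi_symm_of,
            G.genBwd_star_notin hmα, G.genBwd_edge_notin hmβ]
          have hi0 : i = ⟨0, G.wt_pos α⟩ := Fin.ext (by have := i.2; omega)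
          have hj0 : j = ⟨0, G.wt_pos β⟩ := Fin.ext (by have := j.2; omega)
          rw [hi0, hj0]
          have hck := key (WGraph.Rel.CK2 (G := G) (R := R) α β)
          rw [if_neg hab] at hck
          have hr : Finset.range (max (G.wt α) (G.wt β)) = {0} := by
            rw [h1α, h1β, max_self, Finset.range_one]
          rw [hr, Finset.sum_singleton, starT, dif_pos (G.wt_pos α), edgeT,
            dif_pos (G.wt_pos β)] at hck
          exact hck

end WGraph

/-- If `(E, ω)` is a reducible weighted graph and `R` a ring, then
`L_R(E, ω)` is isomorphic to the Leavitt path algebra `L_R(F)` of the associated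
unweighted graph `F`, via the isomorphism which keeps each edge whose source lies
outside the weight forest and reverses (i.e. exchanges with its ghost) each edge whose
source lies in the weight forest. -/
theorem reducible_wlpa_iso_lpa (G : WGraph) (R : Type) [Ring R] (hred : G.Reducible) :
    ∃ φ : G.LWPA R ≃+* DGraph.LPA (G.assoc) R,
      (∀ v : G.V,
        φ (G.π R (G.of R (.vert v))) = DGraph.π G.assoc R (DGraph.of G.assoc R (.vert v))) ∧
      (∀ e : G.E, G.src e.1 ∉ G.WForest →
        φ (G.π R (G.of R (.edge e))) = DGraph.π G.assoc R (DGraph.of G.assoc R (.edge e)) ∧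
        φ (G.π R (G.of R (.star e))) = DGraph.π G.assoc R (DGraph.of G.assoc R (.star e))) ∧
      (∀ e : G.E, G.src e.1 ∈ G.WForest →
        φ (G.π R (G.of R (.edge e))) = DGraph.π G.assoc R (DGraph.of G.assoc R (.star e)) ∧
        φ (G.π R (G.of R (.star e))) = DGraph.π G.assoc R (DGraph.of G.assoc R (.edge e))) := by
  obtain ⟨ψ, hψ⟩ := ringConGen_quot_equiv (G.Phi R) (G.Rel R) (DGraph.Rel G.assoc R)
    (G.rel_fwd R hred) (G.rel_bwd R hred)
  refine ⟨ψ, ?_, ?_, ?_⟩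
  · intro v
    have := hψ (G.of R (.vert v))
    rw [WGraph.Phi_of, WGraph.genFwd_vert] at this
    exact this
  · intro e he
    constructor
    · have := hψ (G.of R (.edge e))
      rw [WGraph.Phi_of, G.genFwd_edge_notin he] at this
      exact this
    · have := hψ (G.of R (.star e))
      rw [WGraph.Phi_of, G.genFwd_star_notin he] at this
      exact this
  · intro e he
    constructor
    · have := hψ (G.of R (.edge e))
      rw [WGraph.Phi_of, G.genFwd_edge_mem he] at this
      exact this
    · have := hψ (G.of R (.star e))
      rw [WGraph.Phi_of, G.genFwd_star_mem he] at this
      exact this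
end
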